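/- arXiv:1902.04456 — 5 statements merged into one kernel-verified Lean document; each statement's English description precedes it below -/
import Mathlib

section
/- Let 0 < t_1 < … < t_n, let S_0 > 0, let 𝒦_i ⊂ (0,∞) be finite strike sets and C_i^K ≥ 0 given call prices for K ∈ 𝒦_i, 1 ≤ i ≤ n. Let M_n be the set of probability measures ℙ on [0,∞)^n (with coordinate process S_1,…,S_n) such that E^ℙ[(S_i−K)_+] = C_i^K for all K ∈ 𝒦_i and all i, and E^ℙ[S_i | σ(S_1,…,S_{i−1})] = S_{i−1} ℙ-a.s. for all i ≥ 2 and E^ℙ[S_1] = S_0. Let M_n^Markov be the subset of those ℙ ∈ M_n for which the coordinate process is Markov, i.e. for every i ≥ 2 and every bounded measurable f : ℝ → ℝ, E^ℙ[f(S_i) | σ(S_1,…,S_{i−1})] = E^ℙ[f(S_i) | σ(S_{i−1})] ℙ-a.s. Then M_n^Markov is non-empty if and only if M_n is non-empty. -/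
open MeasureTheory Finset

namespace Stmt0Aux

open ProbabilityTheory MeasureTheory Set

variable {n : ℕ}

/-- projection to the first `m+1` coordinates -/
def pr (m : ℕ) (hm : m < n) (x : Fin n → ℝ) : Fin (m + 1) → ℝ :=
  fun j => x ⟨j.1, lt_of_le_of_lt (Nat.lt_succ_iff.mp j.2) hm⟩

lemma measurable_pr (m : ℕ) (hm : m < n) : Measurable (pr m hm) :=
  measurable_pi_lambda _ fun _ => measurable_pi_apply _

lemma pr_update (m i : ℕ) (hm : m < n) (hi : i + 1 < n) (hmi : m ≤ i)
    (x : Fin n → ℝ) (y : ℝ) :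
    pr m hm (Function.update x ⟨i + 1, hi⟩ y) = pr m hm x := by
  funext j
  have hj : j.1 ≤ m := Nat.lt_succ_iff.mp j.2
  simp only [pr]
  rw [Function.update_of_ne]
  refine Fin.ne_of_val_ne ?_
  simp only [Fin.val_mk]
  omega

lemma measurable_updf (j : Fin n) :
    Measurable (fun p : (Fin n → ℝ) × ℝ => Function.update p.1 j p.2) := by
  apply measurable_pi_lambda
  intro l
  classical
  by_cases h : l = j
  · subst h
    simp only [Function.update_self]
    exact measurable_snd
  · simp only [Function.update_of_ne h]
    exact (measurable_pi_apply l).comp measurable_fst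

variable (P : Measure (Fin n → ℝ)) [IsProbabilityMeasure P]

/-- the conditional law of `S_{i+1}` given `S_i` under `P` -/
noncomputable def ker (i : ℕ) (hi : i + 1 < n) : Kernel ℝ ℝ :=
  condDistrib (fun x => x ⟨i + 1, hi⟩) (fun x => x ⟨i, Nat.lt_of_succ_lt hi⟩) P

instance (i : ℕ) (hi : i + 1 < n) : IsMarkovKernel (ker P i hi) := by
  rw [ker]; infer_instance

noncomputable def kerE (i : ℕ) (hi : i + 1 < n) : Kernel (Fin n → ℝ) ℝ :=
  (ker P i hi).comap (fun x => x ⟨i, Nat.lt_of_succ_lt hi⟩) (measurable_pi_apply _)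

instance (i : ℕ) (hi : i + 1 < n) : IsMarkovKernel (kerE P i hi) := by
  rw [kerE]; exact Kernel.IsMarkovKernel.comap _ _

/-- resample coordinate `i+1` according to `ker P i` applied to coordinate `i` -/
noncomputable def step (i : ℕ) (hi : i + 1 < n) (μ : Measure (Fin n → ℝ)) :
    Measure (Fin n → ℝ) :=
  (μ ⊗ₘ kerE P i hi).map (fun p => Function.update p.1 ⟨i + 1, hi⟩ p.2)

noncomputable def Qs : ℕ → Measure (Fin n → ℝ)
  | 0 => P
  | k + 1 => if h : k + 1 < n then step P k h (Qs k) else Qs k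

lemma isProb_step (i : ℕ) (hi : i + 1 < n) (μ : Measure (Fin n → ℝ))
    [IsProbabilityMeasure μ] : IsProbabilityMeasure (step P i hi μ) :=
  Measure.isProbabilityMeasure_map (measurable_updf _).aemeasurable

lemma isProb_Qs (k : ℕ) : IsProbabilityMeasure (Qs P k) := by
  induction k with
  | zero => simpa only [Qs] using ‹IsProbabilityMeasure P›
  | succ k ih =>
    rw [Qs]
    split
    · exact @isProb_step _ _ _ _ _ _ ih
    · exact ih

lemma map_pr_step (m i : ℕ) (hm : m < n) (hi : i + 1 < n) (hmi : m ≤ i)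
    (μ : Measure (Fin n → ℝ)) [IsProbabilityMeasure μ] :
    (step P i hi μ).map (pr m hm) = μ.map (pr m hm) := by
  rw [step, Measure.map_map (measurable_pr m hm) (measurable_updf _)]
  have h1 : (pr m hm ∘ fun p : (Fin n → ℝ) × ℝ => Function.update p.1 ⟨i + 1, hi⟩ p.2)
      = pr m hm ∘ Prod.fst := by
    funext p; exact pr_update m i hm hi hmi p.1 p.2
  rw [h1, ← Measure.map_map (measurable_pr m hm) measurable_fst]
  have h2 : (μ ⊗ₘ kerE P i hi).map Prod.fst = μ :=
    Measure.fst_compProd μ (kerE P i hi)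
  rw [h2]

lemma map_pr_Qs (m : ℕ) (hm : m < n) (k : ℕ) (hmk : m ≤ k) :
    (Qs P k).map (pr m hm) = (Qs P m).map (pr m hm) := by
  induction k with
  | zero =>
    have : m = 0 := by omega
    subst this; rfl
  | succ k ih =>
    by_cases h : m ≤ k
    · rw [Qs]
      split
      · rename_i h'
        haveI := isProb_Qs P k
        rw [map_pr_step P m k hm h' h]
        exact ih h
      · exact ih h
    · have : m = k + 1 := by omega
      subst this; rfl

lemma integral_pr_eq (m : ℕ) (hm : m < n) {a b : ℕ} (ha : m ≤ a) (hb : m ≤ b)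
    (H : (Fin (m + 1) → ℝ) → ℝ) (hH : Measurable H) :
    ∫ x, H (pr m hm x) ∂(Qs P a) = ∫ x, H (pr m hm x) ∂(Qs P b) := by
  have key : ∀ c : ℕ, m ≤ c → ∫ x, H (pr m hm x) ∂(Qs P c)
      = ∫ v, H v ∂((Qs P m).map (pr m hm)) := by
    intro c hc
    rw [← map_pr_Qs P m hm c hc]
    exact (integral_map (measurable_pr m hm).aemeasurable hH.aestronglyMeasurable).symm
  rw [key a ha, key b hb]

lemma integrable_pr_iff (m : ℕ) (hm : m < n) {a b : ℕ} (ha : m ≤ a) (hb : m ≤ b)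
    (H : (Fin (m + 1) → ℝ) → ℝ) (hH : Measurable H) :
    Integrable (H ∘ pr m hm) (Qs P a) ↔ Integrable (H ∘ pr m hm) (Qs P b) := by
  have key : ∀ c : ℕ, m ≤ c → (Integrable (H ∘ pr m hm) (Qs P c)
      ↔ Integrable H ((Qs P m).map (pr m hm))) := by
    intro c hc
    rw [← map_pr_Qs P m hm c hc]
    exact (integrable_map_measure hH.aestronglyMeasurable
      (measurable_pr m hm).aemeasurable).symm
  rw [key a ha, key b hb]

lemma map_snd_compProd_apply {α : Type*} [MeasurableSpace α] (μ : Measure α) [SFinite μ]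
    (κ : Kernel α ℝ) [IsSFiniteKernel κ] {s : Set ℝ} (hs : MeasurableSet s) :
    (μ ⊗ₘ κ).map Prod.snd s = ∫⁻ a, κ a s ∂μ := by
  rw [Measure.map_apply measurable_snd hs, Measure.compProd_apply (measurable_snd hs)]
  rfl

lemma pairLaw (i : ℕ) (hi : i + 1 < n) :
    P.map (fun x => (x ⟨i, Nat.lt_of_succ_lt hi⟩, x ⟨i + 1, hi⟩))
      = (P.map fun x => x ⟨i, Nat.lt_of_succ_lt hi⟩) ⊗ₘ ker P i hi := by
  haveI : IsProbabilityMeasure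
      (P.map (fun x => (x ⟨i, Nat.lt_of_succ_lt hi⟩, x ⟨i + 1, hi⟩))) :=
    Measure.isProbabilityMeasure_map
      ((measurable_pi_apply _).prodMk (measurable_pi_apply _)).aemeasurable
  rw [ker, condDistrib]
  conv_lhs =>
    rw [← (P.map (fun x => (x ⟨i, Nat.lt_of_succ_lt hi⟩,
      x ⟨i + 1, hi⟩))).disintegrate (P.map (fun x => (x ⟨i, Nat.lt_of_succ_lt hi⟩,
      x ⟨i + 1, hi⟩))).condKernel]
  congr 1
  exact Measure.fst_map_prodMk (measurable_pi_apply _)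

lemma map_S_top (i : ℕ) (hi : i + 1 < n) {s : Set ℝ} (hs : MeasurableSet s) :
    P.map (fun x => x ⟨i + 1, hi⟩) s
      = ∫⁻ t, ker P i hi t s ∂(P.map fun x => x ⟨i, Nat.lt_of_succ_lt hi⟩) := by
  haveI : IsProbabilityMeasure (P.map fun x : Fin n → ℝ => x ⟨i, Nat.lt_of_succ_lt hi⟩) :=
    Measure.isProbabilityMeasure_map (measurable_pi_apply _).aemeasurable
  have h1 : (P.map (fun x : Fin n → ℝ =>
        (x ⟨i, Nat.lt_of_succ_lt hi⟩, x ⟨i + 1, hi⟩))).map Prod.snd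
      = P.map (fun x : Fin n → ℝ => x ⟨i + 1, hi⟩) :=
    Measure.map_map measurable_snd
      ((measurable_pi_apply _).prodMk (measurable_pi_apply _))
  rw [← h1, pairLaw P i hi, map_snd_compProd_apply _ _ hs]

lemma step_map_top (i : ℕ) (hi : i + 1 < n) (μ : Measure (Fin n → ℝ))
    [IsProbabilityMeasure μ] {s : Set ℝ} (hs : MeasurableSet s) :
    (step P i hi μ).map (fun x => x ⟨i + 1, hi⟩) s
      = ∫⁻ t, ker P i hi t s ∂(μ.map fun x => x ⟨i, Nat.lt_of_succ_lt hi⟩) := by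
  rw [step, Measure.map_map (measurable_pi_apply _) (measurable_updf _)]
  have h1 : ((fun x : Fin n → ℝ => x ⟨i + 1, hi⟩)
      ∘ fun p : (Fin n → ℝ) × ℝ => Function.update p.1 ⟨i + 1, hi⟩ p.2) = Prod.snd := by
    funext p; exact Function.update_self _ _ _
  rw [h1, map_snd_compProd_apply _ _ hs,
    lintegral_map (Kernel.measurable_coe _ hs) (measurable_pi_apply _)]
  simp only [kerE, Kernel.comap_apply]

lemma map_S_Qs (k : ℕ) : ∀ m (hm : m < n), m ≤ k →
    (Qs P k).map (fun x => x ⟨m, hm⟩) = P.map (fun x => x ⟨m, hm⟩) := by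
  induction k with
  | zero =>
    intro m hm h
    have : m = 0 := by omega
    subst this; rfl
  | succ k ih =>
    intro m hm hmk
    by_cases h : m ≤ k
    · have hcomp : (fun x : Fin n → ℝ => x ⟨m, hm⟩)
        = (fun v : Fin (m + 1) → ℝ => v (Fin.last m)) ∘ pr m hm := rfl
      rw [hcomp, ← Measure.map_map (measurable_pi_apply (Fin.last m)) (measurable_pr m hm),
        map_pr_Qs P m hm (k + 1) (by omega),
        ← map_pr_Qs P m hm k h,
        Measure.map_map (measurable_pi_apply (Fin.last m)) (measurable_pr m hm), ← hcomp]
      exact ih m hm h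
    · have hm1 : m = k + 1 := by omega
      subst hm1
      ext s hs
      haveI := isProb_Qs P k
      calc (Qs P (k + 1)).map (fun x => x ⟨k + 1, hm⟩) s
          = ∫⁻ t, ker P k hm t s ∂((Qs P k).map fun x => x ⟨k, Nat.lt_of_succ_lt hm⟩) := by
            rw [Qs, dif_pos hm]
            exact step_map_top P k hm (Qs P k) hs
        _ = ∫⁻ t, ker P k hm t s ∂(P.map fun x => x ⟨k, Nat.lt_of_succ_lt hm⟩) := by
            rw [ih k (Nat.lt_of_succ_lt hm) le_rfl]
        _ = P.map (fun x => x ⟨k + 1, hm⟩) s := (map_S_top P k hm hs).symm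

lemma setIntegral_step (i : ℕ) (hi : i + 1 < n) (μ : Measure (Fin n → ℝ))
    [IsProbabilityMeasure μ] (A : Set (Fin (i + 1) → ℝ)) (hA : MeasurableSet A)
    (g : ℝ → ℝ) (hg : Measurable g)
    (hint : Integrable (fun x => g (x ⟨i + 1, hi⟩)) (step P i hi μ)) :
    ∫ x in pr i (Nat.lt_of_succ_lt hi) ⁻¹' A, g (x ⟨i + 1, hi⟩) ∂(step P i hi μ)
      = ∫ x in pr i (Nat.lt_of_succ_lt hi) ⁻¹' A,
          (∫ y, g y ∂(ker P i hi (x ⟨i, Nat.lt_of_succ_lt hi⟩))) ∂μ := by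
  set u : (Fin n → ℝ) × ℝ → (Fin n → ℝ) :=
    fun p => Function.update p.1 ⟨i + 1, hi⟩ p.2 with hu
  have hum : Measurable u := measurable_updf _
  set s : Set (Fin n → ℝ) := pr i (Nat.lt_of_succ_lt hi) ⁻¹' A with hsdef
  have hs : MeasurableSet s := measurable_pr i _ hA
  have hgS : Measurable fun x : Fin n → ℝ => g (x ⟨i + 1, hi⟩) :=
    hg.comp (measurable_pi_apply _)
  rw [← integral_indicator hs, ← integral_indicator hs]
  have hstep : step P i hi μ = (μ ⊗ₘ kerE P i hi).map u := rfl
  rw [hstep, integral_map hum.aemeasurable ((hgS.indicator hs).aestronglyMeasurable)]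
  have hint' : Integrable (fun p => s.indicator (fun x => g (x ⟨i + 1, hi⟩)) (u p))
      (μ ⊗ₘ kerE P i hi) := by
    have h1 : Integrable (s.indicator fun x => g (x ⟨i + 1, hi⟩))
        ((μ ⊗ₘ kerE P i hi).map u) := by
      rw [← hstep]; exact hint.indicator hs
    exact (integrable_map_measure (hgS.indicator hs).aestronglyMeasurable
      hum.aemeasurable).mp h1
  rw [Measure.integral_compProd hint']
  refine integral_congr_ae (Filter.Eventually.of_forall fun x => ?_)
  have hmem : ∀ y : ℝ, (u (x, y) ∈ s ↔ x ∈ s) := by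
    intro y
    simp only [hsdef, Set.mem_preimage, hu]
    rw [pr_update i i _ hi le_rfl]
  by_cases hxs : x ∈ s
  · have h2 : ∀ y : ℝ, s.indicator (fun z => g (z ⟨i + 1, hi⟩)) (u (x, y)) = g y := by
      intro y
      rw [Set.indicator_of_mem ((hmem y).mpr hxs)]
      simp only [hu]
      rw [Function.update_self]
    calc ∫ y, s.indicator (fun z => g (z ⟨i + 1, hi⟩)) (u (x, y)) ∂(kerE P i hi x)
        = ∫ y, g y ∂(kerE P i hi x) := integral_congr_ae (.of_forall h2)
      _ = s.indicator (fun z => ∫ y, g y ∂(ker P i hi (z ⟨i, Nat.lt_of_succ_lt hi⟩))) x := by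
          rw [Set.indicator_of_mem hxs, kerE, Kernel.comap_apply]
  · have h2 : ∀ y : ℝ, s.indicator (fun z => g (z ⟨i + 1, hi⟩)) (u (x, y)) = 0 := by
      intro y
      rw [Set.indicator_of_notMem (fun h => hxs ((hmem y).mp h))]
    calc ∫ y, s.indicator (fun z => g (z ⟨i + 1, hi⟩)) (u (x, y)) ∂(kerE P i hi x)
        = ∫ _y, (0 : ℝ) ∂(kerE P i hi x) := integral_congr_ae (.of_forall h2)
      _ = s.indicator (fun z => ∫ y, g y ∂(ker P i hi (z ⟨i, Nat.lt_of_succ_lt hi⟩))) x := by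
          rw [integral_zero, Set.indicator_of_notMem hxs]

lemma master (k : ℕ) (hk : k + 1 < n) (A : Set (Fin (k + 1) → ℝ)) (hA : MeasurableSet A)
    (g : ℝ → ℝ) (hg : Measurable g)
    (hint : Integrable (fun x => g (x ⟨k + 1, hk⟩)) (Qs P (n - 1))) :
    ∫ x in pr k (Nat.lt_of_succ_lt hk) ⁻¹' A, g (x ⟨k + 1, hk⟩) ∂(Qs P (n - 1))
      = ∫ x in pr k (Nat.lt_of_succ_lt hk) ⁻¹' A,
          (∫ y, g y ∂(ker P k hk (x ⟨k, Nat.lt_of_succ_lt hk⟩))) ∂(Qs P (n - 1)) := by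
  have hk' : k < n := Nat.lt_of_succ_lt hk
  have hkn : k + 1 ≤ n - 1 := by omega
  have hG : Measurable fun t : ℝ => ∫ y, g y ∂(ker P k hk t) :=
    (MeasureTheory.StronglyMeasurable.integral_kernel_prod_right'
      (κ := ker P k hk) (f := fun p : ℝ × ℝ => g p.2)
      ((hg.comp measurable_snd).stronglyMeasurable)).measurable
  set r : (Fin (k + 2) → ℝ) → (Fin (k + 1) → ℝ) := fun v j => v ⟨j.1, by omega⟩ with hr
  have hrm : Measurable r := measurable_pi_lambda _ fun j => measurable_pi_apply _
  have hrc : ∀ x, r (pr (k + 1) hk x) = pr k hk' x := fun x => funext fun j => rfl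
  set H1 : (Fin (k + 2) → ℝ) → ℝ :=
    (r ⁻¹' A).indicator (fun v => g (v (Fin.last (k + 1)))) with hH1
  have hH1m : Measurable H1 := (hg.comp (measurable_pi_apply _)).indicator (hrm hA)
  set H2 : (Fin (k + 1) → ℝ) → ℝ :=
    A.indicator (fun v => ∫ y, g y ∂(ker P k hk (v (Fin.last k)))) with hH2
  have hH2m : Measurable H2 := (hG.comp (measurable_pi_apply _)).indicator hA
  set s : Set (Fin n → ℝ) := pr k hk' ⁻¹' A with hsdef
  have hs : MeasurableSet s := measurable_pr k hk' hA
  have e1 : ∀ x : Fin n → ℝ,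
      s.indicator (fun z => g (z ⟨k + 1, hk⟩)) x = H1 (pr (k + 1) hk x) := by
    intro x
    by_cases hx : x ∈ s
    · rw [Set.indicator_of_mem hx, hH1]
      exact (Set.indicator_of_mem (show pr (k + 1) hk x ∈ r ⁻¹' A from by
        simp only [Set.mem_preimage]; rw [hrc x]; exact hx)
        (fun v => g (v (Fin.last (k + 1))))).symm
    · rw [Set.indicator_of_notMem hx, hH1]
      exact (Set.indicator_of_notMem (show pr (k + 1) hk x ∉ r ⁻¹' A from by
        simp only [Set.mem_preimage]; rw [hrc x]; exact hx)
        (fun v => g (v (Fin.last (k + 1))))).symm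
  have e2 : ∀ x : Fin n → ℝ,
      s.indicator (fun z => ∫ y, g y ∂(ker P k hk (z ⟨k, hk'⟩))) x = H2 (pr k hk' x) := by
    intro x
    by_cases hx : x ∈ s
    · rw [Set.indicator_of_mem hx, hH2]
      exact (Set.indicator_of_mem (show pr k hk' x ∈ A from hx)
        (fun v => ∫ y, g y ∂(ker P k hk (v (Fin.last k))))).symm
    · rw [Set.indicator_of_notMem hx, hH2]
      exact (Set.indicator_of_notMem (show pr k hk' x ∉ A from hx)
        (fun v => ∫ y, g y ∂(ker P k hk (v (Fin.last k))))).symm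
  haveI := isProb_Qs P (n - 1)
  haveI := isProb_Qs P (k + 1)
  haveI := isProb_Qs P k
  have hQ : Qs P (k + 1) = step P k hk (Qs P k) := by rw [Qs, dif_pos hk]
  have hint1 : Integrable (fun x => g (x ⟨k + 1, hk⟩)) (Qs P (k + 1)) := by
    have hHm : Measurable fun v : Fin (k + 2) → ℝ => g (v (Fin.last (k + 1))) :=
      hg.comp (measurable_pi_apply _)
    exact (integrable_pr_iff P (k + 1) hk (a := n - 1) (b := k + 1) hkn le_rfl _ hHm).mp hint
  calc
    ∫ x in s, g (x ⟨k + 1, hk⟩) ∂(Qs P (n - 1))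
        = ∫ x, H1 (pr (k + 1) hk x) ∂(Qs P (n - 1)) := by
          rw [← integral_indicator hs]
          exact integral_congr_ae (.of_forall e1)
    _ = ∫ x, H1 (pr (k + 1) hk x) ∂(Qs P (k + 1)) :=
          integral_pr_eq P (k + 1) hk hkn le_rfl H1 hH1m
    _ = ∫ x in s, g (x ⟨k + 1, hk⟩) ∂(Qs P (k + 1)) := by
          rw [← integral_indicator hs]
          exact (integral_congr_ae (.of_forall e1)).symm
    _ = ∫ x in s, (∫ y, g y ∂(ker P k hk (x ⟨k, hk'⟩))) ∂(Qs P k) := by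
          rw [hQ]
          exact setIntegral_step P k hk (Qs P k) A hA g hg (by rw [← hQ]; exact hint1)
    _ = ∫ x, H2 (pr k hk' x) ∂(Qs P k) := by
          rw [← integral_indicator hs]
          exact integral_congr_ae (.of_forall e2)
    _ = ∫ x, H2 (pr k hk' x) ∂(Qs P (n - 1)) :=
          integral_pr_eq P k hk' le_rfl (by omega) H2 hH2m
    _ = ∫ x in s, (∫ y, g y ∂(ker P k hk (x ⟨k, hk'⟩))) ∂(Qs P (n - 1)) := by
          rw [← integral_indicator hs]
          exact (integral_congr_ae (.of_forall e2)).symm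

lemma msup_le (i : Fin n) :
    (⨆ j : Fin n, ⨆ _ : j ≤ i,
        MeasurableSpace.comap (fun x : Fin n → ℝ => x j) inferInstance)
      ≤ (inferInstance : MeasurableSpace (Fin n → ℝ)) :=
  iSup_le fun j => iSup_le fun _ => Measurable.comap_le (measurable_pi_apply j)

lemma comap_le_msup (i : Fin n) (j : Fin n) (hj : j ≤ i) :
    MeasurableSpace.comap (fun x : Fin n → ℝ => x j) inferInstance
      ≤ ⨆ j : Fin n, ⨆ _ : j ≤ i,
          MeasurableSpace.comap (fun x : Fin n → ℝ => x j) inferInstance :=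
  le_iSup₂ (f := fun (j : Fin n) (_ : j ≤ i) =>
    MeasurableSpace.comap (fun x : Fin n → ℝ => x j) inferInstance) j hj

lemma sigmaEq (i : Fin n) :
    (⨆ j : Fin n, ⨆ _ : j ≤ i,
        MeasurableSpace.comap (fun x : Fin n → ℝ => x j) inferInstance)
      = MeasurableSpace.comap (pr i.1 i.2) inferInstance := by
  apply le_antisymm
  · refine iSup_le fun j => iSup_le fun hj => ?_
    have h : (fun x : Fin n → ℝ => x j)
        = (fun v : Fin (i.1 + 1) → ℝ => v ⟨j.1, Nat.lt_succ_of_le hj⟩) ∘ pr i.1 i.2 := by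
      funext x; rfl
    rw [h, ← MeasurableSpace.comap_comp]
    exact MeasurableSpace.comap_mono (Measurable.comap_le (measurable_pi_apply _))
  · rw [show (inferInstance : MeasurableSpace (Fin (i.1 + 1) → ℝ))
        = MeasurableSpace.pi from rfl]
    simp_rw [MeasurableSpace.pi, MeasurableSpace.comap_iSup, MeasurableSpace.comap_comp]
    refine iSup_le fun j => ?_
    have hjle : (⟨j.1, lt_of_le_of_lt (Nat.lt_succ_iff.mp j.2) i.2⟩ : Fin n) ≤ i :=
      Nat.lt_succ_iff.mp j.2
    exact comap_le_msup i _ hjle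

lemma kerId (i : ℕ) (hi : i + 1 < n)
    (hX_int : Integrable (fun x => x ⟨i, Nat.lt_of_succ_lt hi⟩) P)
    (hY_int : Integrable (fun x => x ⟨i + 1, hi⟩) P)
    (hmart : P[fun x => x ⟨i + 1, hi⟩ |
        ⨆ j : Fin n, ⨆ _ : j ≤ (⟨i, Nat.lt_of_succ_lt hi⟩ : Fin n),
          MeasurableSpace.comap (fun x : Fin n → ℝ => x j) inferInstance]
      =ᵐ[P] fun x => x ⟨i, Nat.lt_of_succ_lt hi⟩) :
    ∀ᵐ t ∂(P.map (fun x => x ⟨i, Nat.lt_of_succ_lt hi⟩)),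
      (∫ y, y ∂(ker P i hi t)) = t := by
  have hX : Measurable (fun x : Fin n → ℝ => x ⟨i, Nat.lt_of_succ_lt hi⟩) :=
    measurable_pi_apply _
  have h1 : P[(fun x : Fin n → ℝ => x ⟨i + 1, hi⟩) |
        MeasurableSpace.comap (fun x : Fin n → ℝ => x ⟨i, Nat.lt_of_succ_lt hi⟩)
          inferInstance]
      =ᵐ[P] fun a => ∫ y, y ∂(ker P i hi (a ⟨i, Nat.lt_of_succ_lt hi⟩)) := by
    rw [ker]
    exact condExp_ae_eq_integral_condDistrib' hX hY_int
  have hle1 : MeasurableSpace.comap (fun x : Fin n → ℝ => x ⟨i, Nat.lt_of_succ_lt hi⟩)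
        inferInstance
      ≤ ⨆ j : Fin n, ⨆ _ : j ≤ (⟨i, Nat.lt_of_succ_lt hi⟩ : Fin n),
          MeasurableSpace.comap (fun x : Fin n → ℝ => x j) inferInstance :=
    comap_le_msup _ _ le_rfl
  have hle2 := msup_le (n := n) ⟨i, Nat.lt_of_succ_lt hi⟩
  have h3 := condExp_condExp_of_le (μ := P)
    (f := fun x : Fin n → ℝ => x ⟨i + 1, hi⟩) hle1 hle2
  have h4 := condExp_congr_ae (μ := P)
    (m := MeasurableSpace.comap (fun x : Fin n → ℝ => x ⟨i, Nat.lt_of_succ_lt hi⟩)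
      inferInstance) hmart
  have h5 : P[(fun x : Fin n → ℝ => x ⟨i, Nat.lt_of_succ_lt hi⟩) |
        MeasurableSpace.comap (fun x : Fin n → ℝ => x ⟨i, Nat.lt_of_succ_lt hi⟩)
          inferInstance]
      = fun x : Fin n → ℝ => x ⟨i, Nat.lt_of_succ_lt hi⟩ :=
    condExp_of_stronglyMeasurable (hle1.trans hle2)
      ((Measurable.of_comap_le le_rfl).stronglyMeasurable) hX_int
  have h6 : (fun a : Fin n → ℝ => ∫ y, y ∂(ker P i hi (a ⟨i, Nat.lt_of_succ_lt hi⟩)))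
      =ᵐ[P] fun x => x ⟨i, Nat.lt_of_succ_lt hi⟩ := by
    refine h1.symm.trans (h3.symm.trans (h4.trans ?_))
    rw [h5]
  have hGsm : StronglyMeasurable (fun t : ℝ => ∫ y, y ∂(ker P i hi t)) :=
    MeasureTheory.StronglyMeasurable.integral_kernel_prod_right'
      (κ := ker P i hi) (f := fun p : ℝ × ℝ => p.2) measurable_snd.stronglyMeasurable
  have hset : MeasurableSet {t : ℝ | (∫ y, y ∂(ker P i hi t)) = t} :=
    measurableSet_eq_fun hGsm.measurable measurable_id
  rw [ae_map_iff hX.aemeasurable hset]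
  exact h6

lemma bdd_int {α : Type*} [MeasurableSpace α] {μ : Measure α} [IsProbabilityMeasure μ]
    {h : α → ℝ} (hm : AEStronglyMeasurable h μ) {B : ℝ} (hB : ∀ a, |h a| ≤ B) :
    Integrable h μ :=
  (integrable_const B).mono' hm (Filter.Eventually.of_forall fun a => by
    simpa [Real.norm_eq_abs] using hB a)

lemma Q_mart (i : ℕ) (hi : i + 1 < n)
    (hX_int : Integrable (fun x => x ⟨i, Nat.lt_of_succ_lt hi⟩) P)
    (hY_int : Integrable (fun x => x ⟨i + 1, hi⟩) P)
    (hmart : P[fun x => x ⟨i + 1, hi⟩ |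
        ⨆ j : Fin n, ⨆ _ : j ≤ (⟨i, Nat.lt_of_succ_lt hi⟩ : Fin n),
          MeasurableSpace.comap (fun x : Fin n → ℝ => x j) inferInstance]
      =ᵐ[P] fun x => x ⟨i, Nat.lt_of_succ_lt hi⟩)
    (hQY_int : Integrable (fun x => x ⟨i + 1, hi⟩) (Qs P (n - 1)))
    (hQX_int : Integrable (fun x => x ⟨i, Nat.lt_of_succ_lt hi⟩) (Qs P (n - 1))) :
    (Qs P (n - 1))[fun x => x ⟨i + 1, hi⟩ |
        ⨆ j : Fin n, ⨆ _ : j ≤ (⟨i, Nat.lt_of_succ_lt hi⟩ : Fin n),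
          MeasurableSpace.comap (fun x : Fin n → ℝ => x j) inferInstance]
      =ᵐ[Qs P (n - 1)] fun x => x ⟨i, Nat.lt_of_succ_lt hi⟩ := by
  haveI := isProb_Qs P (n - 1)
  have hGid : (fun x : Fin n → ℝ => ∫ y, y ∂(ker P i hi (x ⟨i, Nat.lt_of_succ_lt hi⟩)))
      =ᵐ[Qs P (n - 1)] fun x => x ⟨i, Nat.lt_of_succ_lt hi⟩ := by
    have h0 := kerId P i hi hX_int hY_int hmart
    rw [← map_S_Qs P (n - 1) i (Nat.lt_of_succ_lt hi) (by omega)] at h0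
    exact ae_of_ae_map (measurable_pi_apply _).aemeasurable h0
  have hm := msup_le (n := n) ⟨i, Nat.lt_of_succ_lt hi⟩
  refine (ae_eq_condExp_of_forall_setIntegral_eq hm hQY_int
    (fun s _ _ => hQX_int.integrableOn) ?_ ?_).symm
  · intro s hs _
    rw [sigmaEq (⟨i, Nat.lt_of_succ_lt hi⟩ : Fin n)] at hs
    obtain ⟨A, hA, rfl⟩ := hs
    have h1 := master P i hi A hA id measurable_id hQY_int
    have h2 : ∫ x in pr i (Nat.lt_of_succ_lt hi) ⁻¹' A,
          (∫ y, y ∂(ker P i hi (x ⟨i, Nat.lt_of_succ_lt hi⟩))) ∂(Qs P (n - 1))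
        = ∫ x in pr i (Nat.lt_of_succ_lt hi) ⁻¹' A,
          x ⟨i, Nat.lt_of_succ_lt hi⟩ ∂(Qs P (n - 1)) :=
      setIntegral_congr_ae (measurable_pr i _ hA)
        (hGid.mono fun x hx _ => hx)
    rw [← h2]
    exact h1.symm
  · exact StronglyMeasurable.aestronglyMeasurable
      ((Measurable.of_comap_le (comap_le_msup _ _ le_rfl)).stronglyMeasurable)

lemma Q_markov_sup (i : ℕ) (hi : i + 1 < n)
    (f : ℝ → ℝ) (hf : Measurable f) (B : ℝ) (hB : ∀ y, |f y| ≤ B) :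
    (Qs P (n - 1))[fun x => f (x ⟨i + 1, hi⟩) |
        ⨆ j : Fin n, ⨆ _ : j ≤ (⟨i, Nat.lt_of_succ_lt hi⟩ : Fin n),
          MeasurableSpace.comap (fun x : Fin n → ℝ => x j) inferInstance]
      =ᵐ[Qs P (n - 1)]
        fun x => ∫ y, f y ∂(ker P i hi (x ⟨i, Nat.lt_of_succ_lt hi⟩)) := by
  haveI := isProb_Qs P (n - 1)
  have hGsm : StronglyMeasurable (fun t : ℝ => ∫ y, f y ∂(ker P i hi t)) :=
    MeasureTheory.StronglyMeasurable.integral_kernel_prod_right'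
      (κ := ker P i hi) (f := fun p : ℝ × ℝ => f p.2)
      (hf.comp measurable_snd).stronglyMeasurable
  have hGbd : ∀ t : ℝ, |∫ y, f y ∂(ker P i hi t)| ≤ B := by
    intro t
    rw [← Real.norm_eq_abs]
    calc ‖∫ y, f y ∂(ker P i hi t)‖
        ≤ B * ((ker P i hi t) Set.univ).toReal :=
          norm_integral_le_of_norm_le_const (Filter.Eventually.of_forall fun y => by
            simpa [Real.norm_eq_abs] using hB y)
      _ = B := by simp
  have hQf_int : Integrable (fun x => f (x ⟨i + 1, hi⟩)) (Qs P (n - 1)) :=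
    bdd_int (hf.comp (measurable_pi_apply _)).aestronglyMeasurable (fun x => hB _)
  have hQG_int : Integrable
      (fun x : Fin n → ℝ => ∫ y, f y ∂(ker P i hi (x ⟨i, Nat.lt_of_succ_lt hi⟩)))
      (Qs P (n - 1)) :=
    bdd_int (hGsm.measurable.comp (measurable_pi_apply _)).aestronglyMeasurable
      (fun x => hGbd _)
  have hm := msup_le (n := n) ⟨i, Nat.lt_of_succ_lt hi⟩
  refine (ae_eq_condExp_of_forall_setIntegral_eq hm hQf_int
    (fun s _ _ => hQG_int.integrableOn) ?_ ?_).symm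
  · intro s hs _
    rw [sigmaEq (⟨i, Nat.lt_of_succ_lt hi⟩ : Fin n)] at hs
    obtain ⟨A, hA, rfl⟩ := hs
    exact (master P i hi A hA f hf hQf_int).symm
  · refine StronglyMeasurable.aestronglyMeasurable ?_
    have h1 : Measurable[MeasurableSpace.comap
        (fun x : Fin n → ℝ => x ⟨i, Nat.lt_of_succ_lt hi⟩) inferInstance]
        (fun x : Fin n → ℝ => x ⟨i, Nat.lt_of_succ_lt hi⟩) :=
      Measurable.of_comap_le le_rfl
    exact ((hGsm.measurable.comp
      (Measurable.of_comap_le (comap_le_msup _ _ le_rfl)))).stronglyMeasurable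

lemma Q_markov_comap (i : ℕ) (hi : i + 1 < n)
    (f : ℝ → ℝ) (hf : Measurable f) (B : ℝ) (hB : ∀ y, |f y| ≤ B) :
    (Qs P (n - 1))[fun x => f (x ⟨i + 1, hi⟩) |
        MeasurableSpace.comap (fun x : Fin n → ℝ => x ⟨i, Nat.lt_of_succ_lt hi⟩)
          inferInstance]
      =ᵐ[Qs P (n - 1)]
        fun x => ∫ y, f y ∂(ker P i hi (x ⟨i, Nat.lt_of_succ_lt hi⟩)) := by
  haveI := isProb_Qs P (n - 1)
  have hGsm : StronglyMeasurable (fun t : ℝ => ∫ y, f y ∂(ker P i hi t)) :=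
    MeasureTheory.StronglyMeasurable.integral_kernel_prod_right'
      (κ := ker P i hi) (f := fun p : ℝ × ℝ => f p.2)
      (hf.comp measurable_snd).stronglyMeasurable
  have hGbd : ∀ t : ℝ, |∫ y, f y ∂(ker P i hi t)| ≤ B := by
    intro t
    rw [← Real.norm_eq_abs]
    calc ‖∫ y, f y ∂(ker P i hi t)‖
        ≤ B * ((ker P i hi t) Set.univ).toReal :=
          norm_integral_le_of_norm_le_const (Filter.Eventually.of_forall fun y => by
            simpa [Real.norm_eq_abs] using hB y)
      _ = B := by simp
  have hQf_int : Integrable (fun x => f (x ⟨i + 1, hi⟩)) (Qs P (n - 1)) :=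
    bdd_int (hf.comp (measurable_pi_apply _)).aestronglyMeasurable (fun x => hB _)
  have hQG_int : Integrable
      (fun x : Fin n → ℝ => ∫ y, f y ∂(ker P i hi (x ⟨i, Nat.lt_of_succ_lt hi⟩)))
      (Qs P (n - 1)) :=
    bdd_int (hGsm.measurable.comp (measurable_pi_apply _)).aestronglyMeasurable
      (fun x => hGbd _)
  have hm : MeasurableSpace.comap
      (fun x : Fin n → ℝ => x ⟨i, Nat.lt_of_succ_lt hi⟩) inferInstance
      ≤ (inferInstance : MeasurableSpace (Fin n → ℝ)) :=
    Measurable.comap_le (measurable_pi_apply _)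
  refine (ae_eq_condExp_of_forall_setIntegral_eq hm hQf_int
    (fun s _ _ => hQG_int.integrableOn) ?_ ?_).symm
  · intro s hs _
    obtain ⟨Bs, hBs, rfl⟩ := hs
    have hAeq : (fun x : Fin n → ℝ => x ⟨i, Nat.lt_of_succ_lt hi⟩) ⁻¹' Bs
        = pr i (Nat.lt_of_succ_lt hi) ⁻¹' ((fun v : Fin (i + 1) → ℝ =>
            v (Fin.last i)) ⁻¹' Bs) := rfl
    rw [hAeq]
    exact (master P i hi _ ((measurable_pi_apply (Fin.last i)) hBs) f hf hQf_int).symm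
  · refine StronglyMeasurable.aestronglyMeasurable ?_
    exact (hGsm.measurable.comp (Measurable.of_comap_le le_rfl)).stronglyMeasurable
end Stmt0Aux

/-- existence of a calibrated martingale measure is equivalent to the
existence of a calibrated *Markov* martingale measure. Here measures live on
`[0,∞)ⁿ` (encoded as measures on `Fin n → ℝ` giving full mass to the nonnegative
orthant), the coordinate process is `Sᵢ = x i`, calls are calibrated to `C i K` for
strikes `K ∈ 𝒦 i`, and the martingale/Markov properties are stated via conditional
expectations with respect to `σ(S₁,…,Sᵢ)` and `σ(Sᵢ)`. -/
theorem stmt0 (n : ℕ) (hn : 0 < n)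
    (t : Fin n → ℝ) (ht : StrictMono t) (htpos : ∀ i, 0 < t i)
    (S0 : ℝ) (hS0 : 0 < S0)
    (𝒦 : Fin n → Finset ℝ) (h𝒦 : ∀ i, ∀ K ∈ 𝒦 i, 0 < K)
    (C : Fin n → ℝ → ℝ) (hC : ∀ i, ∀ K ∈ 𝒦 i, 0 ≤ C i K)
    (Mn MnMarkov : Set (Measure (Fin n → ℝ)))
    (hMn : Mn = {P | IsProbabilityMeasure P ∧
      P {x | ∀ i, 0 ≤ x i} = 1 ∧
      (∀ i : Fin n, Integrable (fun x => x i) P) ∧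
      (∀ i : Fin n, ∀ K ∈ 𝒦 i, ∫ x, max (x i - K) 0 ∂P = C i K) ∧
      (∫ x, x ⟨0, hn⟩ ∂P) = S0 ∧
      (∀ i : Fin n, ∀ hi : i.val + 1 < n,
        P[fun x => x ⟨i.val + 1, hi⟩ |
            ⨆ j : Fin n, ⨆ _ : j ≤ i,
              MeasurableSpace.comap (fun x : Fin n → ℝ => x j) inferInstance]
          =ᵐ[P] fun x => x i)})
    (hMnMarkov : MnMarkov = {P ∈ Mn |
      ∀ i : Fin n, ∀ hi : i.val + 1 < n, ∀ f : ℝ → ℝ, Measurable f →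
        (∃ B : ℝ, ∀ y : ℝ, |f y| ≤ B) →
        P[fun x => f (x ⟨i.val + 1, hi⟩) |
            ⨆ j : Fin n, ⨆ _ : j ≤ i,
              MeasurableSpace.comap (fun x : Fin n → ℝ => x j) inferInstance]
          =ᵐ[P]
        P[fun x => f (x ⟨i.val + 1, hi⟩) |
            MeasurableSpace.comap (fun x : Fin n → ℝ => x i) inferInstance]}) :
    MnMarkov.Nonempty ↔ Mn.Nonempty := by
  subst hMn hMnMarkov
  constructor
  · rintro ⟨P, hP, -⟩
    exact ⟨P, hP⟩
  · rintro ⟨P, hprob, horth, hint, hcall, hS0', hmart⟩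
    haveI := hprob
    set Q := Stmt0Aux.Qs P (n - 1) with hQdef
    haveI hQprob : IsProbabilityMeasure Q := Stmt0Aux.isProb_Qs P (n - 1)
    have hmap : ∀ m : Fin n, Q.map (fun x => x m) = P.map (fun x => x m) := by
      intro m
      exact Stmt0Aux.map_S_Qs P (n - 1) m.1 m.2 (by omega)
    have hQint : ∀ m : Fin n, Integrable (fun x => x m) Q := by
      intro m
      have h1 : Integrable id (P.map (fun x => x m)) :=
        (integrable_map_measure aestronglyMeasurable_id
          (measurable_pi_apply m).aemeasurable).mpr (hint m)
      rw [← hmap m] at h1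
      exact (integrable_map_measure aestronglyMeasurable_id
        (measurable_pi_apply m).aemeasurable).mp h1
    have hInteq : ∀ (m : Fin n) (g : ℝ → ℝ), Continuous g →
        ∫ x, g (x m) ∂Q = ∫ x, g (x m) ∂P := by
      intro m g hg
      rw [← integral_map (measurable_pi_apply m).aemeasurable
          (hg.aestronglyMeasurable),
        ← integral_map (μ := P) (measurable_pi_apply m).aemeasurable
          (hg.aestronglyMeasurable), hmap m]
    have hsetm : MeasurableSet {x : Fin n → ℝ | ∀ i, 0 ≤ x i} := by
      have h : {x : Fin n → ℝ | ∀ i, 0 ≤ x i}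
          = ⋂ i, (fun x : Fin n → ℝ => x i) ⁻¹' Set.Ici 0 := by
        ext x; simp [Set.mem_iInter]
      rw [h]
      exact MeasurableSet.iInter fun i => (measurable_pi_apply i) measurableSet_Ici
    have hPc : P {x : Fin n → ℝ | ∀ i, 0 ≤ x i}ᶜ = 0 := by
      rw [measure_compl hsetm (measure_ne_top _ _), horth, measure_univ, tsub_self]
    have hQorth : Q {x | ∀ i, 0 ≤ x i} = 1 := by
      rw [← prob_compl_eq_zero_iff hsetm]
      have hsub : {x : Fin n → ℝ | ∀ i, 0 ≤ x i}ᶜ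
          ⊆ ⋃ i, (fun x : Fin n → ℝ => x i) ⁻¹' Set.Iio 0 := by
        intro x hx
        simp only [Set.mem_compl_iff, Set.mem_setOf_eq, not_forall] at hx
        obtain ⟨i, hi⟩ := hx
        exact Set.mem_iUnion.mpr ⟨i, by simpa using lt_of_not_ge hi⟩
      refine le_antisymm (le_trans (measure_mono hsub)
        (le_trans (measure_iUnion_le _) ?_)) zero_le
      have hzero : ∀ i : Fin n, Q ((fun x : Fin n → ℝ => x i) ⁻¹' Set.Iio 0) = 0 := by
        intro i
        have h1 : Q ((fun x : Fin n → ℝ => x i) ⁻¹' Set.Iio 0)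
            = (Q.map (fun x => x i)) (Set.Iio 0) :=
          (Measure.map_apply (measurable_pi_apply i) measurableSet_Iio).symm
        rw [h1, hmap i, Measure.map_apply (measurable_pi_apply i) measurableSet_Iio]
        refine le_antisymm (le_trans (measure_mono ?_) (le_of_eq hPc)) zero_le
        intro x hx
        simp only [Set.mem_preimage, Set.mem_Iio] at hx
        simp only [Set.mem_compl_iff, Set.mem_setOf_eq, not_forall]
        exact ⟨i, by linarith⟩
      simp [hzero]
    refine ⟨Q, ⟨⟨hQprob, hQorth, hQint, ?_, ?_, ?_⟩, ?_⟩⟩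
    · intro i K hK
      rw [hInteq i (fun s => max (s - K) 0)
        ((continuous_id.sub continuous_const).max continuous_const)]
      exact hcall i K hK
    · exact (hInteq ⟨0, hn⟩ id continuous_id).trans hS0'
    · intro i hi
      have h := Stmt0Aux.Q_mart P i.1 hi (hint ⟨i.1, Nat.lt_of_succ_lt hi⟩)
        (hint ⟨i.1 + 1, hi⟩) (hmart i hi) (hQint ⟨i.1 + 1, hi⟩)
        (hQint ⟨i.1, Nat.lt_of_succ_lt hi⟩)
      exact h
    · intro i hi f hf hB
      obtain ⟨B, hB⟩ := hB
      exact (Stmt0Aux.Q_markov_sup P i.1 hi f hf B hB).trans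
        (Stmt0Aux.Q_markov_comap P i.1 hi f hf B hB).symm
end

section
/- Let (u_1^*, h_1^*, V^*) ∈ ℝ^{𝒳_1} × ℝ^{𝒳_1} × ℝ^{𝒦_2} be a global minimizer of G. Then the measure ℙ^*(ds_1,ds_2) := exp(−Σ_{K∈𝒦_2} V_K^*(s_2−K)_+ − u_1^*(s_1) − h_1^*(s_1)(s_2−s_1)) m_0(ds_1,ds_2) belongs to M̃₁₂(ℙ¹): it is a probability measure on 𝒳_1 × [0,∞) with first marginal ℙ¹, it satisfies ∫_{{s_1}×[0,∞)} (s_2−s_1) dℙ^* = 0 for every s_1 ∈ 𝒳_1, and C_2^{K,bid} ≤ ∫ (s_2−K)_+ dℙ^* ≤ C_2^{K,ask} for every K ∈ 𝒦_2. -/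
open MeasureTheory Finset

noncomputable section

/-- The penalty function `f^{K,bid/ask}(V, ω)` with `c⁻ = ΔC^bid`, `c⁺ = ΔC^ask`. -/
def fpen (cb ca w V : ℝ) : ℝ :=
  if cb ≤ V * w ∧ V * w ≤ ca then V ^ 2 * w / 2
  else if ca < V * w then ca * V - ca ^ 2 / (2 * w)
  else cb * V - cb ^ 2 / (2 * w)

/-- `Δ_{(u,h,V)}(s₁,s₂) = u(s₁) + h(s₁)(s₂ − s₁) + Σ_K V_K (s₂ − K)₊` for `s₁` in the
grid `X1` (and `0` off the grid, which is `m₀`-negligible). -/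
def Dlt (X1 : Finset ℝ) {k : ℕ} (K : Fin k → ℝ)
    (u h : X1 → ℝ) (V : Fin k → ℝ) (p : ℝ × ℝ) : ℝ :=
  (∑ a ∈ X1.attach, if (a : ℝ) = p.1 then u a + h a * (p.2 - p.1) else 0)
    + ∑ i, V i * max (p.2 - K i) 0

/-- The dual functional `G(u, h, V)` of the paper (for the pair of maturities). -/
def Gfun (X1 : Finset ℝ) (P1 : ℝ → ℝ) {k : ℕ} (K : Fin k → ℝ)
    (Cbid Cask ω : Fin k → ℝ) (m0 : Measure (ℝ × ℝ))
    (u h : X1 → ℝ) (V : Fin k → ℝ) : ℝ :=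
  (∑ a ∈ X1.attach, u a * P1 (a : ℝ))
    + (∑ i, fpen (Cbid i - (Cbid i + Cask i) / 2) (Cask i - (Cbid i + Cask i) / 2)
        (ω i) (V i))
    + (∑ i, V i * ((Cbid i + Cask i) / 2))
    + ∫ p, Real.exp (-(Dlt X1 K u h V p)) ∂m0

/-- Membership in `M̃₁₂(ℙ¹)`: probability measure on `𝒳₁ × [0,∞)` with first marginal
`ℙ¹`, satisfying the martingale constraint conditionally on each `s₁ ∈ 𝒳₁`, and whose
call prices at the strikes of `𝒦₂` lie within the bid/ask bounds. -/
def MemM12 (X1 : Finset ℝ) (P1 : ℝ → ℝ) {k : ℕ} (K : Fin k → ℝ)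
    (Cbid Cask : Fin k → ℝ) (P : Measure (ℝ × ℝ)) : Prop :=
  IsProbabilityMeasure P ∧
  P {p : ℝ × ℝ | p.1 ∈ X1 ∧ 0 ≤ p.2} = 1 ∧
  Integrable (fun p : ℝ × ℝ => p.2) P ∧
  (∀ s ∈ X1, (P {p : ℝ × ℝ | p.1 = s}).toReal = P1 s) ∧
  (∀ s ∈ X1, ∫ p in {q : ℝ × ℝ | q.1 = s}, (p.2 - p.1) ∂P = 0) ∧
  (∀ i : Fin k, Cbid i ≤ ∫ p, max (p.2 - K i) 0 ∂P ∧
    (∫ p, max (p.2 - K i) 0 ∂P) ≤ Cask i)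


lemma exp_le_aux (x : ℝ) : Real.exp x ≤ 1 + x + x ^ 2 * Real.exp |x| := by
  rcases le_or_gt 0 x with hx | hx
  · rw [abs_of_nonneg hx]
    have h1 : 1 - x ≤ Real.exp (-x) := by linarith [Real.add_one_le_exp (-x)]
    have h2 : (1 - x) * Real.exp x ≤ 1 := by
      have := mul_le_mul_of_nonneg_right h1 (Real.exp_pos x).le
      rwa [← Real.exp_add, neg_add_cancel, Real.exp_zero] at this
    nlinarith [Real.exp_pos x, sq_nonneg x]
  · rw [abs_of_neg hx]
    have h3 : 1 ≤ Real.exp (-x) := Real.one_le_exp (by linarith)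
    have h4 : Real.exp x ≤ 1 + x + x ^ 2 := by
      rcases le_or_gt (-1) x with h | h
      · have := Real.abs_exp_sub_one_sub_id_le (x := x) (by rw [abs_of_neg hx]; linarith)
        have := abs_le.mp this
        nlinarith [this.2]
      · have : Real.exp x < 1 := by
          rw [← Real.exp_zero]; exact Real.exp_lt_exp.mpr (by linarith)
        nlinarith
    nlinarith [sq_nonneg x]

lemma key_scalar (c B : ℝ) (hB : 0 ≤ B)
    (h : ∀ t : ℝ, |t| ≤ 1 → 0 ≤ t * c + t ^ 2 * B) : c = 0 := by
  by_contra hc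
  have hc' : 0 < |c| := abs_pos.mpr hc
  have hden : 0 < 2 * B + |c| := by linarith
  set t := -c / (2 * B + |c|) with ht
  have habs : |t| ≤ 1 := by
    rw [ht, abs_div, abs_neg, abs_of_pos hden, div_le_one hden]; linarith
  have h0 := h t habs
  have hval : t * c + t ^ 2 * B = (c ^ 2 * (-(B + |c|))) / (2 * B + |c|) ^ 2 := by
    rw [ht]; field_simp; ring
  rw [hval] at h0
  have : (c ^ 2 * (-(B + |c|))) / (2 * B + |c|) ^ 2 < 0 := by
    apply div_neg_of_neg_of_pos
    · have : 0 < c ^ 2 := by positivity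
      nlinarith
    · positivity
  linarith



noncomputable def Ppen (cb ca z : ℝ) : ℝ :=
  if cb ≤ z ∧ z ≤ ca then z ^ 2 else if ca < z then 2 * ca * z - ca ^ 2
  else 2 * cb * z - cb ^ 2

lemma Ppen_key (cb ca x y : ℝ) (hcc : cb ≤ ca) :
    Ppen cb ca y ≤ Ppen cb ca x + 2 * (max cb (min x ca)) * (y - x) + (y - x) ^ 2 := by
  unfold Ppen
  split_ifs with h1 h2 h3 h2 h3 h4 h3 h4 <;> try push_neg at *
  · rw [min_eq_left h2.2, max_eq_right h2.1]; nlinarith [sq_nonneg (y - x)]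
  · rw [min_eq_right h3.le, max_eq_right hcc]
    nlinarith [mul_nonneg (by linarith : (0:ℝ) ≤ x - ca) (by linarith [h1.2] : (0:ℝ) ≤ x + ca - 2*y)]
  · have hxb : x < cb := by by_contra hx; push_neg at hx; linarith [h2 hx]
    rw [min_eq_left (by linarith), max_eq_left (by linarith)]
    nlinarith [mul_nonneg (by linarith : (0:ℝ) ≤ cb - x) (by linarith [h1.1] : (0:ℝ) ≤ 2*y - cb - x)]
  · rw [min_eq_left h3.2, max_eq_right h3.1]; nlinarith [sq_nonneg (y - ca)]
  · rw [min_eq_right h4.le, max_eq_right hcc]; nlinarith [sq_nonneg (y - ca)]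
  · have hxb : x < cb := by by_contra hx; push_neg at hx; linarith [h3 hx]
    rw [min_eq_left (by linarith), max_eq_left (by linarith)]
    nlinarith [sq_nonneg (y - ca), mul_nonneg (by linarith : (0:ℝ) ≤ cb - x) (by linarith : (0:ℝ) ≤ 2*y - cb - x)]
  · rw [min_eq_left h3.2, max_eq_right h3.1]; nlinarith [sq_nonneg (y - cb)]
  · rw [min_eq_right h4.le, max_eq_right hcc]
    nlinarith [sq_nonneg (y - cb), mul_nonneg (by linarith : (0:ℝ) ≤ x - ca) (by linarith : (0:ℝ) ≤ x + ca - 2*y)]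
  · have hxb : x < cb := by by_contra hx; push_neg at hx; linarith [h3 hx]
    rw [min_eq_left (by linarith), max_eq_left (by linarith)]
    nlinarith [sq_nonneg (y - cb)]

lemma fpen_eq (cb ca w V : ℝ) (hw : 0 < w) :
    fpen cb ca w V = Ppen cb ca (V * w) / (2 * w) := by
  have hw' : w ≠ 0 := ne_of_gt hw
  unfold fpen Ppen
  split_ifs <;> field_simp <;> ring

lemma fpen_upper (cb ca w V t : ℝ) (hcc : cb ≤ ca) (hw : 0 < w) :
    fpen cb ca w (V + t) ≤ fpen cb ca w V + t * max cb (min (V * w) ca) + w * t ^ 2 / 2 := by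
  have hw' : w ≠ 0 := ne_of_gt hw
  rw [fpen_eq _ _ _ _ hw, fpen_eq _ _ _ _ hw]
  have h := Ppen_key cb ca (V * w) ((V + t) * w) hcc
  have h2 : ((V + t) * w - V * w) = t * w := by ring
  rw [h2] at h
  have h3 : (Ppen cb ca (V * w) + 2 * (max cb (min (V * w) ca)) * (t * w) + (t * w) ^ 2) / (2 * w)
      = Ppen cb ca (V * w) / (2 * w) + t * max cb (min (V * w) ca) + w * t ^ 2 / 2 := by
    field_simp
  calc Ppen cb ca ((V + t) * w) / (2 * w)
      ≤ (Ppen cb ca (V * w) + 2 * (max cb (min (V * w) ca)) * (t * w) + (t * w) ^ 2) / (2 * w) :=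
        div_le_div_of_nonneg_right ?_ (by linarith) |>.trans_eq rfl
    _ = _ := h3
  exact h

lemma measurable_Dlt (X1 : Finset ℝ) {k : ℕ} (K : Fin k → ℝ)
    (u h : X1 → ℝ) (V : Fin k → ℝ) : Measurable (Dlt X1 K u h V) := by
  unfold Dlt
  apply Measurable.add
  · apply Finset.measurable_sum
    intro a _
    apply Measurable.ite
    · exact measurableSet_eq_fun measurable_const measurable_fst
    · exact (measurable_const.add ((measurable_snd.sub measurable_fst).const_mul _))
    · exact measurable_const
  · apply Finset.measurable_sum
    intro i _
    exact ((measurable_snd.sub measurable_const).max measurable_const).const_mul _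

lemma Dlt_bound (X1 : Finset ℝ) (hX1 : ∀ s ∈ X1, 0 ≤ s) {k : ℕ} (K : Fin k → ℝ)
    (hKpos : ∀ i, 0 < K i) (u h : X1 → ℝ) (V : Fin k → ℝ) :
    ∃ A B : ℝ, ∀ p : ℝ × ℝ, p.1 ∈ X1 → 0 ≤ p.2 →
      |Dlt X1 K u h V p| ≤ A + B * p.2 := by
  refine ⟨∑ a ∈ X1.attach, (|u a| + |h a| * (a : ℝ)),
    (∑ a ∈ X1.attach, |h a|) + ∑ i, |V i|, ?_⟩
  intro p hp1 hp2
  have h1 : |∑ a ∈ X1.attach, if (a : ℝ) = p.1 then u a + h a * (p.2 - p.1) else 0|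
      ≤ ∑ a ∈ X1.attach, ((|u a| + |h a| * (a : ℝ)) + |h a| * p.2) := by
    refine (Finset.abs_sum_le_sum_abs _ _).trans (Finset.sum_le_sum ?_)
    intro a _
    by_cases hc : (a : ℝ) = p.1
    · rw [if_pos hc]
      have ha0 : (0:ℝ) ≤ (a : ℝ) := hX1 _ a.2
      have : |p.2 - p.1| ≤ p.2 + (a : ℝ) := by
        rw [← hc]; rw [abs_le]; constructor <;> [skip; skip] <;> nlinarith
      calc |u a + h a * (p.2 - p.1)| ≤ |u a| + |h a| * |p.2 - p.1| := by
            rw [← abs_mul]; exact abs_add_le _ _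
        _ ≤ |u a| + |h a| * (p.2 + (a:ℝ)) :=
            add_le_add_right (mul_le_mul_of_nonneg_left this (abs_nonneg _)) _
        _ = |u a| + |h a| * (a:ℝ) + |h a| * p.2 := by ring
    · rw [if_neg hc, abs_zero]
      have := abs_nonneg (u a); have := abs_nonneg (h a); have := hX1 _ a.2
      positivity
  have h2 : |∑ i, V i * max (p.2 - K i) 0| ≤ (∑ i, |V i|) * p.2 := by
    rw [Finset.sum_mul]
    refine (Finset.abs_sum_le_sum_abs _ _).trans (Finset.sum_le_sum ?_)
    intro i _
    rw [abs_mul]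
    refine mul_le_mul_of_nonneg_left ?_ (abs_nonneg _)
    rw [abs_of_nonneg (le_max_right _ _)]
    have := (hKpos i).le
    simp only [max_le_iff]; constructor <;> linarith
  calc |Dlt X1 K u h V p| ≤ _ + _ := abs_add_le _ _
    _ ≤ (∑ a ∈ X1.attach, ((|u a| + |h a| * (a : ℝ)) + |h a| * p.2)) + (∑ i, |V i|) * p.2 :=
        add_le_add h1 h2
    _ = _ := by rw [Finset.sum_add_distrib, ← Finset.sum_mul]; ring


variable {X1 : Finset ℝ} {m0 : Measure (ℝ × ℝ)} [IsFiniteMeasure m0]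

lemma ae_supp (hm0supp : m0 {p : ℝ × ℝ | p.1 ∈ X1 ∧ 0 ≤ p.2}ᶜ = 0) :
    ∀ᵐ p ∂m0, p.1 ∈ X1 ∧ 0 ≤ p.2 := by
  rw [ae_iff]
  convert hm0supp using 2
  rfl

lemma integrable_dens_mul
    (hm0supp : m0 {p : ℝ × ℝ | p.1 ∈ X1 ∧ 0 ≤ p.2}ᶜ = 0)
    (hm0exp : ∀ a : ℝ, Integrable (fun p : ℝ × ℝ => Real.exp (a * p.2)) m0)
    {d : ℝ × ℝ → ℝ} (hdm : Measurable d) {A B : ℝ}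
    (hd : ∀ p : ℝ × ℝ, p.1 ∈ X1 → 0 ≤ p.2 → |d p| ≤ A + B * p.2)
    {f : ℝ × ℝ → ℝ} (hfm : Measurable f) {C c : ℝ}
    (hf : ∀ p : ℝ × ℝ, p.1 ∈ X1 → 0 ≤ p.2 → |f p| ≤ C * Real.exp (c * p.2)) :
    Integrable (fun p => Real.exp (-(d p)) * f p) m0 := by
  refine Integrable.mono' (((hm0exp (B + c)).const_mul (Real.exp A * C)))
    ((hdm.neg.exp.mul hfm).aestronglyMeasurable) ?_
  filter_upwards [ae_supp hm0supp] with p hp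
  obtain ⟨hp1, hp2⟩ := hp
  have hdb := hd p hp1 hp2
  have hfb := hf p hp1 hp2
  have h1 : Real.exp (-(d p)) ≤ Real.exp (A + B * p.2) :=
    Real.exp_le_exp.mpr (by rw [abs_le] at hdb; linarith [hdb.1])
  have h2 : |f p| ≤ C * Real.exp (c * p.2) := hfb
  have hC : 0 ≤ C * Real.exp (c * p.2) := le_trans (abs_nonneg _) h2
  calc ‖Real.exp (-(d p)) * f p‖ = Real.exp (-(d p)) * |f p| := by
        rw [Real.norm_eq_abs, abs_mul, abs_of_pos (Real.exp_pos _)]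
    _ ≤ Real.exp (A + B * p.2) * (C * Real.exp (c * p.2)) :=
        mul_le_mul h1 h2 (abs_nonneg _) (Real.exp_pos _).le
    _ = Real.exp A * C * Real.exp ((B + c) * p.2) := by
        rw [Real.exp_add, add_mul, Real.exp_add]; ring
    _ = _ := by ring

lemma foc
    (hm0supp : m0 {p : ℝ × ℝ | p.1 ∈ X1 ∧ 0 ≤ p.2}ᶜ = 0)
    (hm0exp : ∀ a : ℝ, Integrable (fun p : ℝ × ℝ => Real.exp (a * p.2)) m0)
    {d : ℝ × ℝ → ℝ} (hdm : Measurable d) {A B : ℝ}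
    (hd : ∀ p : ℝ × ℝ, p.1 ∈ X1 → 0 ≤ p.2 → |d p| ≤ A + B * p.2)
    {φ : ℝ × ℝ → ℝ} (hφm : Measurable φ) {M : ℝ} (hM : 0 ≤ M)
    (hφ : ∀ p : ℝ × ℝ, p.1 ∈ X1 → 0 ≤ p.2 → |φ p| ≤ M + p.2)
    {L D : ℝ} (hD : 0 ≤ D)
    (hG : ∀ t : ℝ, |t| ≤ 1 → 0 ≤ t * L + t ^ 2 * D +
      ((∫ p, Real.exp (-(d p)) * Real.exp (-(t * φ p)) ∂m0) -
        ∫ p, Real.exp (-(d p)) ∂m0)) :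
    ∫ p, Real.exp (-(d p)) * φ p ∂m0 = L := by
  set ψ : ℝ × ℝ → ℝ := fun p => Real.exp (-(d p)) with hψ
  set g : ℝ × ℝ → ℝ := fun p => φ p ^ 2 * Real.exp |φ p| with hg
  -- growth bounds
  have hφb : ∀ p : ℝ × ℝ, p.1 ∈ X1 → 0 ≤ p.2 → |φ p| ≤ (M + 1) * Real.exp (1 * p.2) := by
    intro p h1 h2
    refine (hφ p h1 h2).trans ?_
    have e1 : p.2 + 1 ≤ Real.exp p.2 := Real.add_one_le_exp _
    have e2 : 1 ≤ Real.exp p.2 := Real.one_le_exp h2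
    rw [one_mul]; nlinarith
  have hgb : ∀ p : ℝ × ℝ, p.1 ∈ X1 → 0 ≤ p.2 →
      |g p| ≤ (M + 1) ^ 2 * Real.exp M * Real.exp (3 * p.2) := by
    intro p h1 h2
    have hb := hφ p h1 h2
    have e1 : 1 ≤ Real.exp p.2 := Real.one_le_exp h2
    have e2 : p.2 + 1 ≤ Real.exp p.2 := Real.add_one_le_exp _
    have h3 : |φ p| ≤ (M + 1) * Real.exp p.2 := by nlinarith
    have h4 : Real.exp |φ p| ≤ Real.exp M * Real.exp p.2 := by
      rw [← Real.exp_add]; exact Real.exp_le_exp.mpr (by linarith)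
    have h5 : φ p ^ 2 ≤ ((M + 1) * Real.exp p.2) ^ 2 := by
      rw [← sq_abs]; exact pow_le_pow_left₀ (abs_nonneg _) h3 2
    calc |g p| = φ p ^ 2 * Real.exp |φ p| := by
          rw [hg, abs_mul, abs_of_nonneg (sq_nonneg _), abs_of_pos (Real.exp_pos _)]
      _ ≤ ((M + 1) * Real.exp p.2) ^ 2 * (Real.exp M * Real.exp p.2) := by
          refine mul_le_mul h5 h4 (Real.exp_pos _).le (by positivity)
      _ = (M + 1) ^ 2 * Real.exp M * Real.exp (3 * p.2) := by
          rw [show (3:ℝ) * p.2 = p.2 + p.2 + p.2 by ring, Real.exp_add, Real.exp_add]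
          ring
  -- integrability
  have hI1 : Integrable ψ m0 := by
    have := integrable_dens_mul hm0supp hm0exp hdm hd (f := fun _ => (1:ℝ))
      measurable_const (C := 1) (c := 0)
      (fun p _ _ => by simp)
    simpa using this
  have hIφ : Integrable (fun p => ψ p * φ p) m0 :=
    integrable_dens_mul hm0supp hm0exp hdm hd hφm hφb
  have hgm : Measurable g := (hφm.pow_const 2).mul (Real.measurable_exp.comp hφm.abs)
  have hI2 : Integrable (fun p => ψ p * g p) m0 :=
    integrable_dens_mul hm0supp hm0exp hdm hd hgm hgb
  have hI2nn : 0 ≤ ∫ p, ψ p * g p ∂m0 := by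
    refine integral_nonneg fun p => mul_nonneg (Real.exp_pos _).le ?_
    exact mul_nonneg (sq_nonneg _) (Real.exp_pos _).le
  have hIt : ∀ t : ℝ, |t| ≤ 1 →
      Integrable (fun p => ψ p * Real.exp (-(t * φ p))) m0 := by
    intro t ht
    refine integrable_dens_mul hm0supp hm0exp hdm hd
      ((hφm.const_mul t).neg.exp) (C := Real.exp M) (c := 1) ?_
    intro p h1 h2
    have hb := hφ p h1 h2
    rw [abs_of_pos (Real.exp_pos _), ← Real.exp_add]
    refine Real.exp_le_exp.mpr ?_
    have : -(t * φ p) ≤ |t| * |φ p| := by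
      rw [← abs_mul, ← abs_neg]; exact le_abs_self _
    have : -(t * φ p) ≤ |φ p| := this.trans (by nlinarith [abs_nonneg (φ p)])
    linarith [this.trans hb]
  -- pointwise bound and integral comparison
  have hmono : ∀ t : ℝ, |t| ≤ 1 →
      (∫ p, ψ p * Real.exp (-(t * φ p)) ∂m0) ≤
        (∫ p, ψ p ∂m0) - t * (∫ p, ψ p * φ p ∂m0) + t ^ 2 * (∫ p, ψ p * g p ∂m0) := by
    intro t ht
    have hpt : ∀ p : ℝ × ℝ, ψ p * Real.exp (-(t * φ p)) ≤
        ψ p - t * (ψ p * φ p) + t ^ 2 * (ψ p * g p) := by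
      intro p
      have hx := exp_le_aux (-(t * φ p))
      have h1 : Real.exp |(-(t * φ p))| ≤ Real.exp |φ p| := by
        refine Real.exp_le_exp.mpr ?_
        rw [abs_neg, abs_mul]
        nlinarith [abs_nonneg (φ p), abs_nonneg t]
      have h2 : Real.exp (-(t * φ p)) ≤ 1 - t * φ p + t ^ 2 * g p := by
        have h3 : (-(t * φ p)) ^ 2 * Real.exp |(-(t * φ p))| ≤ t ^ 2 * g p := by
          have e : (-(t * φ p)) ^ 2 = t ^ 2 * φ p ^ 2 := by ring
          rw [e, hg, mul_assoc]
          exact mul_le_mul_of_nonneg_left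
            (mul_le_mul_of_nonneg_left h1 (sq_nonneg _)) (sq_nonneg _)
        linarith [hx]
      have := mul_le_mul_of_nonneg_left h2 (Real.exp_pos (-(d p))).le
      calc ψ p * Real.exp (-(t * φ p)) ≤ ψ p * (1 - t * φ p + t ^ 2 * g p) := this
        _ = ψ p - t * (ψ p * φ p) + t ^ 2 * (ψ p * g p) := by ring
    have hint : Integrable (fun p => ψ p - t * (ψ p * φ p) + t ^ 2 * (ψ p * g p)) m0 :=
      (hI1.sub (hIφ.const_mul t)).add (hI2.const_mul (t ^ 2))
    calc (∫ p, ψ p * Real.exp (-(t * φ p)) ∂m0)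
        ≤ ∫ p, (ψ p - t * (ψ p * φ p) + t ^ 2 * (ψ p * g p)) ∂m0 :=
          integral_mono (hIt t ht) hint hpt
      _ = (∫ p, ψ p ∂m0) - t * (∫ p, ψ p * φ p ∂m0) + t ^ 2 * (∫ p, ψ p * g p ∂m0) := by
          have e1 : Integrable (fun p => ψ p - t * (ψ p * φ p)) m0 := by
            exact hI1.sub (hIφ.const_mul t)
          have e2 : Integrable (fun p => t ^ 2 * (ψ p * g p)) m0 := by
            exact hI2.const_mul (t ^ 2)
          have e3 : Integrable (fun p => t * (ψ p * φ p)) m0 := by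
            exact hIφ.const_mul t
          rw [integral_add e1 e2, integral_sub hI1 e3, integral_const_mul, integral_const_mul]
  have hkey : L - (∫ p, ψ p * φ p ∂m0) = 0 := by
    refine key_scalar _ (D + ∫ p, ψ p * g p ∂m0) (by linarith) ?_
    intro t ht
    have h1 := hG t ht
    have h2 := hmono t ht
    have h3 : (∫ p, Real.exp (-(d p)) * Real.exp (-(t * φ p)) ∂m0)
        = ∫ p, ψ p * Real.exp (-(t * φ p)) ∂m0 := rfl
    rw [h3] at h1
    nlinarith [h1, h2]
  linarith


/-- if `(u₁*, h₁*, V*)` is a global minimizer of `G`, then the measure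
`ℙ*(ds₁,ds₂) = exp(−Δ_{(u₁*,h₁*,V*)}(s₁,s₂)) m₀(ds₁,ds₂)` belongs to `M̃₁₂(ℙ¹)`. -/
theorem stmt3 (X1 : Finset ℝ) (hX1ne : X1.Nonempty) (hX1 : ∀ s ∈ X1, 0 ≤ s)
    (P1 : ℝ → ℝ) (hP1pos : ∀ s ∈ X1, 0 < P1 s) (hP1sum : ∑ s ∈ X1, P1 s = 1)
    (k : ℕ) (K : Fin k → ℝ) (hK : StrictMono K) (hKpos : ∀ i, 0 < K i)
    (Cbid Cask : Fin k → ℝ) (hba : ∀ i, Cbid i ≤ Cask i)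
    (ω : Fin k → ℝ) (hω : ∀ i, 0 < ω i)
    (m0 : Measure (ℝ × ℝ)) [IsFiniteMeasure m0]
    (hm0supp : m0 {p : ℝ × ℝ | p.1 ∈ X1 ∧ 0 ≤ p.2}ᶜ = 0)
    (hm0exp : ∀ a : ℝ, Integrable (fun p : ℝ × ℝ => Real.exp (a * p.2)) m0)
    (ustar hstar : X1 → ℝ) (Vstar : Fin k → ℝ)
    (hmin : ∀ (u h : X1 → ℝ) (V : Fin k → ℝ),
      Gfun X1 P1 K Cbid Cask ω m0 ustar hstar Vstar ≤ Gfun X1 P1 K Cbid Cask ω m0 u h V) :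
    MemM12 X1 P1 K Cbid Cask
      (m0.withDensity
        (fun p => ENNReal.ofReal (Real.exp (-(Dlt X1 K ustar hstar Vstar p))))) := by
  classical
  have hdm : Measurable (Dlt X1 K ustar hstar Vstar) := measurable_Dlt X1 K ustar hstar Vstar
  obtain ⟨A, B, hd⟩ := Dlt_bound X1 hX1 K hKpos ustar hstar Vstar
  -- FOC in the u-directions
  have hu : ∀ a : {x // x ∈ X1},
      ∫ p : ℝ × ℝ, Real.exp (-(Dlt X1 K ustar hstar Vstar p)) *
        (if (a : ℝ) = p.1 then (1:ℝ) else 0) ∂m0 = P1 (a : ℝ) := by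
    intro a
    have hφm : Measurable (fun p : ℝ × ℝ => if (a : ℝ) = p.1 then (1:ℝ) else 0) :=
      Measurable.ite (measurableSet_eq_fun measurable_const measurable_fst)
        measurable_const measurable_const
    refine foc hm0supp hm0exp hdm hd hφm (M := 1) one_pos.le ?_ (le_refl (0:ℝ)) ?_
    · intro p h1 h2
      split_ifs <;> simp <;> linarith
    · intro t ht
      set u_t : X1 → ℝ := fun b => ustar b + t * (if b = a then 1 else 0) with hu_t
      have hshift : ∀ p : ℝ × ℝ, Dlt X1 K u_t hstar Vstar p
          = Dlt X1 K ustar hstar Vstar p + t * (if (a : ℝ) = p.1 then (1:ℝ) else 0) := by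
        intro p
        simp only [Dlt]
        have hcongr : ∀ b ∈ X1.attach,
            (if (b : ℝ) = p.1 then u_t b + hstar b * (p.2 - p.1) else 0)
            = (if (b : ℝ) = p.1 then ustar b + hstar b * (p.2 - p.1) else 0)
              + (if b = a then (if (b : ℝ) = p.1 then t else 0) else 0) := by
          intro b _
          simp only [hu_t]; split_ifs <;> ring
        rw [Finset.sum_congr rfl hcongr, Finset.sum_add_distrib,
          Finset.sum_ite_eq' X1.attach a, if_pos (Finset.mem_attach _ _)]
        split_ifs <;> ring
      have hIeq : (∫ p : ℝ × ℝ, Real.exp (-(Dlt X1 K u_t hstar Vstar p)) ∂m0)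
          = ∫ p : ℝ × ℝ, Real.exp (-(Dlt X1 K ustar hstar Vstar p)) *
              Real.exp (-(t * (if (a : ℝ) = p.1 then (1:ℝ) else 0))) ∂m0 := by
        refine integral_congr_ae (Filter.Eventually.of_forall fun p => ?_)
        simp only [hshift p, neg_add, Real.exp_add]
      have hsum : (∑ b ∈ X1.attach, u_t b * P1 (b : ℝ))
          = (∑ b ∈ X1.attach, ustar b * P1 (b : ℝ)) + t * P1 (a : ℝ) := by
        have hcongr : ∀ b ∈ X1.attach, u_t b * P1 (b : ℝ)
            = ustar b * P1 (b : ℝ) + (if b = a then t * P1 (b : ℝ) else 0) := by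
          intro b _
          simp only [hu_t]; split_ifs <;> ring
        rw [Finset.sum_congr rfl hcongr, Finset.sum_add_distrib,
          Finset.sum_ite_eq' X1.attach a, if_pos (Finset.mem_attach _ _)]
      have h0 := hmin u_t hstar Vstar
      unfold Gfun at h0
      rw [hIeq, hsum] at h0
      nlinarith [h0]
  -- FOC in the h-directions
  have hh : ∀ a : {x // x ∈ X1},
      ∫ p : ℝ × ℝ, Real.exp (-(Dlt X1 K ustar hstar Vstar p)) *
        (if (a : ℝ) = p.1 then p.2 - p.1 else 0) ∂m0 = 0 := by
    intro a
    have hφm : Measurable (fun p : ℝ × ℝ => if (a : ℝ) = p.1 then p.2 - p.1 else 0) :=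
      Measurable.ite (measurableSet_eq_fun measurable_const measurable_fst)
        (measurable_snd.sub measurable_fst) measurable_const
    refine foc hm0supp hm0exp hdm hd hφm (M := (a : ℝ)) (hX1 _ a.2) ?_ (le_refl (0:ℝ)) ?_
    · intro p h1 h2
      have ha0 : (0:ℝ) ≤ (a : ℝ) := hX1 _ a.2
      split_ifs with hc
      · rw [← hc, abs_le]; constructor <;> nlinarith
      · rw [abs_zero]; linarith
    · intro t ht
      set h_t : X1 → ℝ := fun b => hstar b + t * (if b = a then 1 else 0) with hh_t
      have hshift : ∀ p : ℝ × ℝ, Dlt X1 K ustar h_t Vstar p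
          = Dlt X1 K ustar hstar Vstar p + t * (if (a : ℝ) = p.1 then p.2 - p.1 else 0) := by
        intro p
        simp only [Dlt]
        have hcongr : ∀ b ∈ X1.attach,
            (if (b : ℝ) = p.1 then ustar b + h_t b * (p.2 - p.1) else 0)
            = (if (b : ℝ) = p.1 then ustar b + hstar b * (p.2 - p.1) else 0)
              + (if b = a then (if (b : ℝ) = p.1 then t * (p.2 - p.1) else 0) else 0) := by
          intro b _
          simp only [hh_t]; split_ifs <;> ring
        rw [Finset.sum_congr rfl hcongr, Finset.sum_add_distrib,
          Finset.sum_ite_eq' X1.attach a, if_pos (Finset.mem_attach _ _)]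
        split_ifs <;> ring
      have hIeq : (∫ p : ℝ × ℝ, Real.exp (-(Dlt X1 K ustar h_t Vstar p)) ∂m0)
          = ∫ p : ℝ × ℝ, Real.exp (-(Dlt X1 K ustar hstar Vstar p)) *
              Real.exp (-(t * (if (a : ℝ) = p.1 then p.2 - p.1 else 0))) ∂m0 := by
        refine integral_congr_ae (Filter.Eventually.of_forall fun p => ?_)
        simp only [hshift p, neg_add, Real.exp_add]
      have h0 := hmin ustar h_t Vstar
      unfold Gfun at h0
      rw [hIeq] at h0
      nlinarith [h0]
  -- FOC in the V-directions
  have hV : ∀ i : Fin k,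
      ∫ p : ℝ × ℝ, Real.exp (-(Dlt X1 K ustar hstar Vstar p)) * max (p.2 - K i) 0 ∂m0
        = (Cbid i + Cask i) / 2 + max (Cbid i - (Cbid i + Cask i) / 2)
            (min (Vstar i * ω i) (Cask i - (Cbid i + Cask i) / 2)) := by
    intro i
    have hφm : Measurable (fun p : ℝ × ℝ => max (p.2 - K i) 0) :=
      (measurable_snd.sub measurable_const).max measurable_const
    refine foc hm0supp hm0exp hdm hd hφm (M := 0) (le_refl (0:ℝ))
      ?_ (D := ω i / 2) (by linarith [hω i]) ?_
    · intro p h1 h2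
      rw [abs_of_nonneg (le_max_right _ _), zero_add]
      have := (hKpos i).le
      simp only [max_le_iff]; constructor <;> linarith
    · intro t ht
      set V_t : Fin k → ℝ := fun j => Vstar j + t * (if j = i then 1 else 0) with hV_t
      have hshift : ∀ p : ℝ × ℝ, Dlt X1 K ustar hstar V_t p
          = Dlt X1 K ustar hstar Vstar p + t * max (p.2 - K i) 0 := by
        intro p
        simp only [Dlt]
        have hcongr : ∀ j ∈ (Finset.univ : Finset (Fin k)),
            V_t j * max (p.2 - K j) 0
            = Vstar j * max (p.2 - K j) 0
              + (if j = i then t * max (p.2 - K j) 0 else 0) := by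
          intro j _
          simp only [hV_t]; split_ifs <;> ring
        rw [Finset.sum_congr rfl hcongr, Finset.sum_add_distrib,
          Finset.sum_ite_eq' Finset.univ i, if_pos (Finset.mem_univ _)]
        ring
      have hIeq : (∫ p : ℝ × ℝ, Real.exp (-(Dlt X1 K ustar hstar V_t p)) ∂m0)
          = ∫ p : ℝ × ℝ, Real.exp (-(Dlt X1 K ustar hstar Vstar p)) *
              Real.exp (-(t * max (p.2 - K i) 0)) ∂m0 := by
        refine integral_congr_ae (Filter.Eventually.of_forall fun p => ?_)
        simp only [hshift p, neg_add, Real.exp_add]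
      -- penalty sum bound
      have hfp : (∑ j, fpen (Cbid j - (Cbid j + Cask j) / 2) (Cask j - (Cbid j + Cask j) / 2)
            (ω j) (V_t j))
          ≤ (∑ j, fpen (Cbid j - (Cbid j + Cask j) / 2) (Cask j - (Cbid j + Cask j) / 2)
            (ω j) (Vstar j))
            + (t * max (Cbid i - (Cbid i + Cask i) / 2)
                (min (Vstar i * ω i) (Cask i - (Cbid i + Cask i) / 2)) + ω i * t ^ 2 / 2) := by
        have hkey := fpen_upper (Cbid i - (Cbid i + Cask i) / 2) (Cask i - (Cbid i + Cask i) / 2)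
          (ω i) (Vstar i) t (by linarith [hba i]) (hω i)
        rw [← Finset.sum_erase_add Finset.univ _ (Finset.mem_univ i),
          ← Finset.sum_erase_add Finset.univ
            (fun j => fpen (Cbid j - (Cbid j + Cask j) / 2) (Cask j - (Cbid j + Cask j) / 2)
              (ω j) (Vstar j)) (Finset.mem_univ i)]
        have herase : (∑ j ∈ Finset.univ.erase i,
              fpen (Cbid j - (Cbid j + Cask j) / 2) (Cask j - (Cbid j + Cask j) / 2)
                (ω j) (V_t j))
            = ∑ j ∈ Finset.univ.erase i,
              fpen (Cbid j - (Cbid j + Cask j) / 2) (Cask j - (Cbid j + Cask j) / 2)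
                (ω j) (Vstar j) := by
          refine Finset.sum_congr rfl fun j hj => ?_
          have hji : j ≠ i := Finset.ne_of_mem_erase hj
          simp [hV_t, hji]
        have hVti : V_t i = Vstar i + t := by simp [hV_t]
        rw [herase, hVti]
        linarith [hkey]
      have hmid : (∑ j, V_t j * ((Cbid j + Cask j) / 2))
          = (∑ j, Vstar j * ((Cbid j + Cask j) / 2)) + t * ((Cbid i + Cask i) / 2) := by
        have hcongr : ∀ j ∈ (Finset.univ : Finset (Fin k)),
            V_t j * ((Cbid j + Cask j) / 2)
            = Vstar j * ((Cbid j + Cask j) / 2)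
              + (if j = i then t * ((Cbid j + Cask j) / 2) else 0) := by
          intro j _
          simp only [hV_t]; split_ifs <;> ring
        rw [Finset.sum_congr rfl hcongr, Finset.sum_add_distrib,
          Finset.sum_ite_eq' Finset.univ i, if_pos (Finset.mem_univ _)]
      have h0 := hmin ustar hstar V_t
      unfold Gfun at h0
      rw [hIeq, hmid] at h0
      nlinarith [h0, hfp]
  -- === measure-theoretic assembly ===
  set P := m0.withDensity
      (fun p => ENNReal.ofReal (Real.exp (-(Dlt X1 K ustar hstar Vstar p)))) with hPdef
  have hψm : Measurable (fun p : ℝ × ℝ => Real.exp (-(Dlt X1 K ustar hstar Vstar p))) :=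
    hdm.neg.exp
  have hψnn : ∀ p : ℝ × ℝ, 0 ≤ Real.exp (-(Dlt X1 K ustar hstar Vstar p)) :=
    fun p => (Real.exp_pos _).le
  have hIψ : Integrable (fun p : ℝ × ℝ => Real.exp (-(Dlt X1 K ustar hstar Vstar p))) m0 := by
    simpa using integrable_dens_mul hm0supp hm0exp hdm hd (f := fun _ => (1:ℝ))
      measurable_const (C := 1) (c := 0) (fun p _ _ => by simp)
  have hIφu : ∀ a : {x // x ∈ X1},
      Integrable (fun p : ℝ × ℝ => Real.exp (-(Dlt X1 K ustar hstar Vstar p)) *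
        (if (a : ℝ) = p.1 then (1:ℝ) else 0)) m0 := by
    intro a
    refine integrable_dens_mul hm0supp hm0exp hdm hd
      (Measurable.ite (measurableSet_eq_fun measurable_const measurable_fst)
        measurable_const measurable_const) (C := 1) (c := 0) ?_
    intro p _ _
    split_ifs <;> simp
  have hρm : Measurable (fun p : ℝ × ℝ =>
      Real.toNNReal (Real.exp (-(Dlt X1 K ustar hstar Vstar p)))) :=
    measurable_real_toNNReal.comp hψm
  have hPd : P = m0.withDensity (fun p =>
      ((Real.toNNReal (Real.exp (-(Dlt X1 K ustar hstar Vstar p))) : NNReal) : ENNReal)) := hPdef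
  -- total mass of the density
  have hsum1 : (∫ p : ℝ × ℝ, Real.exp (-(Dlt X1 K ustar hstar Vstar p)) ∂m0) = 1 := by
    have hae : ∀ᵐ p ∂m0, Real.exp (-(Dlt X1 K ustar hstar Vstar p))
        = ∑ a ∈ X1.attach, Real.exp (-(Dlt X1 K ustar hstar Vstar p)) *
            (if (a : ℝ) = p.1 then (1:ℝ) else 0) := by
      filter_upwards [ae_supp hm0supp] with p hp
      rw [← Finset.mul_sum]
      have hone : (∑ a ∈ X1.attach, if (a : ℝ) = p.1 then (1:ℝ) else 0) = 1 := by
        rw [Finset.sum_attach X1 (fun x => if x = p.1 then (1:ℝ) else 0),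
          Finset.sum_ite_eq' X1 p.1 (fun _ => (1:ℝ)), if_pos hp.1]
      rw [hone, mul_one]
    rw [integral_congr_ae hae, integral_finset_sum _ (fun a _ => hIφu a),
      Finset.sum_congr rfl (fun a _ => hu a), Finset.sum_attach X1 P1]
    exact hP1sum
  -- measure of a measurable set under P
  have hPA : ∀ A : Set (ℝ × ℝ), MeasurableSet A →
      P A = ENNReal.ofReal (∫ p in A, Real.exp (-(Dlt X1 K ustar hstar Vstar p)) ∂m0) := by
    intro A hA
    rw [hPdef, withDensity_apply _ hA]
    exact (ofReal_integral_eq_lintegral_ofReal hIψ.restrict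
      (Filter.Eventually.of_forall fun p => hψnn p)).symm
  have hprob : IsProbabilityMeasure P := by
    constructor
    rw [hPA Set.univ MeasurableSet.univ, Measure.restrict_univ, hsum1, ENNReal.ofReal_one]
  -- integral conversion lemmas
  have hint_eq : ∀ f : ℝ × ℝ → ℝ, (∫ p, f p ∂P)
      = ∫ p, Real.exp (-(Dlt X1 K ustar hstar Vstar p)) * f p ∂m0 := by
    intro f
    rw [hPd, integral_withDensity_eq_integral_smul hρm]
    refine integral_congr_ae (Filter.Eventually.of_forall fun p => ?_)
    simp [NNReal.smul_def, Real.coe_toNNReal _ (hψnn p)]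
  have hint_eq_set : ∀ (A : Set (ℝ × ℝ)), MeasurableSet A → ∀ f : ℝ × ℝ → ℝ,
      (∫ p in A, f p ∂P)
      = ∫ p in A, Real.exp (-(Dlt X1 K ustar hstar Vstar p)) * f p ∂m0 := by
    intro A hA f
    rw [hPd, restrict_withDensity hA, integral_withDensity_eq_integral_smul hρm]
    refine integral_congr_ae (Filter.Eventually.of_forall fun p => ?_)
    simp [NNReal.smul_def, Real.coe_toNNReal _ (hψnn p)]
  -- support
  have hS : MeasurableSet {p : ℝ × ℝ | p.1 ∈ X1 ∧ 0 ≤ p.2} := by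
    rw [Set.setOf_and]
    exact (measurable_fst X1.finite_toSet.measurableSet).inter
      (measurableSet_le measurable_const measurable_snd)
  have hScompl : P {p : ℝ × ℝ | p.1 ∈ X1 ∧ 0 ≤ p.2}ᶜ = 0 := by
    rw [hPdef, withDensity_apply _ hS.compl, Measure.restrict_eq_zero.mpr hm0supp]
    exact lintegral_zero_measure _
  have hS1 : P {p : ℝ × ℝ | p.1 ∈ X1 ∧ 0 ≤ p.2} = 1 :=
    (prob_compl_eq_zero_iff hS).mp hScompl
  -- integrability of snd
  have hIsnd : Integrable (fun p : ℝ × ℝ => p.2) P := by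
    rw [hPd, integrable_withDensity_iff_integrable_smul hρm]
    have hI : Integrable (fun p : ℝ × ℝ =>
        Real.exp (-(Dlt X1 K ustar hstar Vstar p)) * p.2) m0 := by
      refine integrable_dens_mul hm0supp hm0exp hdm hd measurable_snd (C := 1) (c := 1) ?_
      intro p h1 h2
      rw [abs_of_nonneg h2, one_mul, one_mul]
      linarith [Real.add_one_le_exp p.2]
    refine hI.congr (Filter.Eventually.of_forall fun p => ?_)
    simp [NNReal.smul_def, Real.coe_toNNReal _ (hψnn p)]
  -- assemble
  unfold MemM12
  refine ⟨hprob, hS1, hIsnd, ?_, ?_, ?_⟩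
  · -- marginal
    intro s hs
    have hAs : MeasurableSet {p : ℝ × ℝ | p.1 = s} :=
      measurableSet_eq_fun measurable_fst measurable_const
    have hind : (Set.indicator {p : ℝ × ℝ | p.1 = s}
        (fun p => Real.exp (-(Dlt X1 K ustar hstar Vstar p))))
        = fun p => Real.exp (-(Dlt X1 K ustar hstar Vstar p)) *
            (if ((⟨s, hs⟩ : {x // x ∈ X1}) : ℝ) = p.1 then (1:ℝ) else 0) := by
      funext p
      by_cases hc : p.1 = s
      · simp only [Set.indicator_apply, Set.mem_setOf_eq, if_pos hc, if_pos hc.symm, mul_one]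
      · simp only [Set.indicator_apply, Set.mem_setOf_eq, if_neg hc,
          if_neg (fun h => hc (Eq.symm h)), mul_zero]
    rw [hPA _ hAs, ← integral_indicator hAs, hind, hu ⟨s, hs⟩,
      ENNReal.toReal_ofReal (hP1pos s hs).le]
  · -- martingale
    intro s hs
    have hAs : MeasurableSet {q : ℝ × ℝ | q.1 = s} :=
      measurableSet_eq_fun measurable_fst measurable_const
    rw [hint_eq_set _ hAs _, ← integral_indicator hAs]
    have hind : (Set.indicator {q : ℝ × ℝ | q.1 = s}
        (fun p => Real.exp (-(Dlt X1 K ustar hstar Vstar p)) * (p.2 - p.1)))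
        = fun p => Real.exp (-(Dlt X1 K ustar hstar Vstar p)) *
            (if ((⟨s, hs⟩ : {x // x ∈ X1}) : ℝ) = p.1 then p.2 - p.1 else 0) := by
      funext p
      by_cases hc : p.1 = s
      · simp only [Set.indicator_apply, Set.mem_setOf_eq, if_pos hc, if_pos hc.symm, mul_one]
      · simp only [Set.indicator_apply, Set.mem_setOf_eq, if_neg hc,
          if_neg (fun h => hc (Eq.symm h)), mul_zero]
    rw [hind]
    exact hh ⟨s, hs⟩
  · -- call prices
    intro i
    have hcall := hV i
    have hle : Cbid i - (Cbid i + Cask i) / 2 ≤ Cask i - (Cbid i + Cask i) / 2 := by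
      linarith [hba i]
    constructor
    · rw [hint_eq, hcall]
      have := le_max_left (Cbid i - (Cbid i + Cask i) / 2)
        (min (Vstar i * ω i) (Cask i - (Cbid i + Cask i) / 2))
      linarith
    · rw [hint_eq, hcall]
      have : max (Cbid i - (Cbid i + Cask i) / 2)
          (min (Vstar i * ω i) (Cask i - (Cbid i + Cask i) / 2))
          ≤ Cask i - (Cbid i + Cask i) / 2 :=
        max_le hle (min_le_right _ _)
      linarith

end
end

section
/- Let N denote the standard normal cumulative distribution function, and for S_0 > 0, K > 0, ω > 0 define BS(S_0,K,ω) := S_0 N(d_+) − K N(d_−) with d_± := ln(S_0/K)/ω ± ω/2. Then ω ↦ BS(S_0,K,ω) is continuous and strictly increasing on (0,∞), with lim_{ω→0⁺} BS(S_0,K,ω) = (S_0 − K)_+ and lim_{ω→∞} BS(S_0,K,ω) = S_0. Consequently, for every price p ∈ ((S_0 − K)_+, S_0) there exists a unique ω > 0 with BS(S_0,K,ω) = p (uniqueness of the implied volatility). -/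
open Real MeasureTheory Filter Set intervalIntegral Topology

/-- the Black–Scholes call price `ω ↦ BS(S₀, K, ω)` is continuous and
strictly increasing on `(0, ∞)`, tends to `(S₀ − K)₊` as `ω → 0⁺` and to `S₀` as
`ω → ∞`; consequently every price `p ∈ ((S₀ − K)₊, S₀)` is attained at a unique
total volatility `ω > 0` (uniqueness of the implied volatility). -/
theorem stmt12 (S0 K : ℝ) (hS0 : 0 < S0) (hK : 0 < K)
    (N : ℝ → ℝ)
    (hN : ∀ x, N x = (Real.sqrt (2 * Real.pi))⁻¹ * ∫ t in Set.Iic x, Real.exp (-(t ^ 2) / 2))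
    (BS : ℝ → ℝ)
    (hBS : ∀ ω, BS ω =
      S0 * N (Real.log (S0 / K) / ω + ω / 2) - K * N (Real.log (S0 / K) / ω - ω / 2)) :
    ContinuousOn BS (Set.Ioi 0) ∧
    StrictMonoOn BS (Set.Ioi 0) ∧
    Filter.Tendsto BS (nhdsWithin 0 (Set.Ioi 0)) (nhds (max (S0 - K) 0)) ∧
    Filter.Tendsto BS Filter.atTop (nhds S0) ∧
    (∀ p ∈ Set.Ioo (max (S0 - K) 0) S0, ∃! ω : ℝ, 0 < ω ∧ BS ω = p) := by
  set f : ℝ → ℝ := fun t => Real.exp (-(t ^ 2) / 2) with hf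
  set c : ℝ := (Real.sqrt (2 * Real.pi))⁻¹ with hcdef
  set m : ℝ := Real.log (S0 / K) with hm
  have hsq : 0 < Real.sqrt (2 * Real.pi) := Real.sqrt_pos.2 (by positivity)
  have hc : 0 < c := inv_pos.2 hsq
  have hfpos : ∀ x, 0 < f x := fun x => by rw [hf]; positivity
  have hfc : Continuous f := by rw [hf]; continuity
  have hfi : Integrable f := by
    have : f = fun t => Real.exp (-(1 / 2 : ℝ) * t ^ 2) := by
      rw [hf]; funext t; ring_nf
    rw [this]; exact integrable_exp_neg_mul_sq (by norm_num)
  have hint : ∫ t, f t = Real.sqrt (2 * Real.pi) := by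
    have h1 : f = fun t => Real.exp (-(1 / 2 : ℝ) * t ^ 2) := by
      rw [hf]; funext t; ring_nf
    rw [h1, integral_gaussian]
    congr 1
    ring
  have hNf : ∀ x, N x = c * ∫ t in Set.Iic x, f t := fun x => hN x
  have hrepr : ∀ y, N y = c * (∫ t in Set.Iic 0, f t) + c * ∫ t in (0 : ℝ)..y, f t := by
    intro y
    rw [hNf y, ← integral_Iic_sub_Iic hfi.integrableOn hfi.integrableOn]
    ring
  have hNfun : N = fun y => c * (∫ t in Set.Iic 0, f t) + c * ∫ t in (0 : ℝ)..y, f t :=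
    funext hrepr
  -- derivative of N
  have hNder : ∀ x, HasDerivAt N (c * f x) x := by
    intro x
    have hd : HasDerivAt (fun y => ∫ t in (0 : ℝ)..y, f t) (f x) x :=
      integral_hasDerivAt_right hfi.intervalIntegrable
        hfc.aestronglyMeasurable.stronglyMeasurableAtFilter hfc.continuousAt
    rw [hNfun]
    exact (hd.const_mul c).const_add _
  have hNcont : Continuous N := continuous_iff_continuousAt.2 fun x => (hNder x).continuousAt
  -- limits of N
  have hNtop : Tendsto N atTop (𝓝 1) := by
    have h1 : Tendsto (fun y => ∫ t in (0 : ℝ)..y, f t) atTop (𝓝 (∫ t in Set.Ioi 0, f t)) :=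
      intervalIntegral_tendsto_integral_Ioi 0 hfi.integrableOn tendsto_id
    have h2 := (tendsto_const_nhds (x := c * ∫ t in Set.Iic 0, f t)).add (h1.const_mul c)
    rw [hNfun]
    convert h2 using 2
    rw [← mul_add, integral_Iic_add_Ioi hfi.integrableOn hfi.integrableOn, hint, hcdef]
    exact (inv_mul_cancel₀ hsq.ne').symm
  have hNbot : Tendsto N atBot (𝓝 0) := by
    have h1 : Tendsto (fun y => ∫ t in y..(0 : ℝ), f t) atBot (𝓝 (∫ t in Set.Iic 0, f t)) :=
      intervalIntegral_tendsto_integral_Iic 0 hfi.integrableOn tendsto_id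
    have h2 := (tendsto_const_nhds (x := c * ∫ t in Set.Iic 0, f t)).sub (h1.const_mul c)
    rw [sub_self] at h2
    refine h2.congr fun y => ?_
    rw [hrepr y]
    have : (∫ t in (0 : ℝ)..y, f t) = -∫ t in y..(0 : ℝ), f t := (integral_symm y 0)
    rw [this]; ring
  -- key identity: K * f d₋ = S0 * f d₊
  have hkey : ∀ ω : ℝ, ω ≠ 0 → K * f (m / ω - ω / 2) = S0 * f (m / ω + ω / 2) := by
    intro ω hω
    have hS : S0 = K * Real.exp m := by
      rw [hm, Real.exp_log (div_pos hS0 hK)]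
      field_simp
    rw [hS, hf]
    simp only []
    rw [mul_assoc, ← Real.exp_add]
    congr 1
    field_simp
    ring
  -- derivative of BS
  have hBSfun : BS = fun ω => S0 * N (m / ω + ω / 2) - K * N (m / ω - ω / 2) := funext hBS
  have hBSder : ∀ ω : ℝ, 0 < ω → HasDerivAt BS (S0 * (c * f (m / ω + ω / 2))) ω := by
    intro ω hω
    have hω0 : ω ≠ 0 := hω.ne'
    have hdiv : HasDerivAt (fun x : ℝ => m / x) (m * -(ω ^ 2)⁻¹) ω := by
      simpa [div_eq_mul_inv] using (hasDerivAt_inv hω0).const_mul m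
    have hhalf : HasDerivAt (fun x : ℝ => x / 2) (1 / 2 : ℝ) ω := by
      simpa using (hasDerivAt_id ω).div_const 2
    have hdp : HasDerivAt (fun x : ℝ => m / x + x / 2) (m * -(ω ^ 2)⁻¹ + 1 / 2) ω :=
      hdiv.add hhalf
    have hdm : HasDerivAt (fun x : ℝ => m / x - x / 2) (m * -(ω ^ 2)⁻¹ - 1 / 2) ω :=
      hdiv.sub hhalf
    have h1 : HasDerivAt (fun x : ℝ => N (m / x + x / 2))
        (c * f (m / ω + ω / 2) * (m * -(ω ^ 2)⁻¹ + 1 / 2)) ω := (hNder _).comp ω hdp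
    have h2 : HasDerivAt (fun x : ℝ => N (m / x - x / 2))
        (c * f (m / ω - ω / 2) * (m * -(ω ^ 2)⁻¹ - 1 / 2)) ω := (hNder _).comp ω hdm
    have h3 := (h1.const_mul S0).sub (h2.const_mul K)
    rw [hBSfun]
    have heq : S0 * (c * f (m / ω + ω / 2) * (m * -(ω ^ 2)⁻¹ + 1 / 2)) -
        K * (c * f (m / ω - ω / 2) * (m * -(ω ^ 2)⁻¹ - 1 / 2)) =
        S0 * (c * f (m / ω + ω / 2)) := by
      have hkq := hkey ω hω0
      linear_combination (-(c * (m * -(ω ^ 2)⁻¹ - 1 / 2))) * hkq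
    rw [← heq]
    exact h3
  -- continuity
  have hCont : ContinuousOn BS (Set.Ioi 0) := fun ω hω =>
    ((hBSder ω hω).continuousAt).continuousWithinAt
  -- strict monotonicity
  have hMono : StrictMonoOn BS (Set.Ioi 0) := by
    refine strictMonoOn_of_deriv_pos (convex_Ioi 0) hCont ?_
    intro x hx
    rw [interior_Ioi] at hx
    rw [(hBSder x hx).deriv]
    exact mul_pos hS0 (mul_pos hc (hfpos _))
  -- helper for limits
  have hComp : ∀ {l : Filter ℝ} {u v : ℝ},
      Tendsto (fun ω => N (m / ω + ω / 2)) l (𝓝 u) →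
      Tendsto (fun ω => N (m / ω - ω / 2)) l (𝓝 v) →
      Tendsto BS l (𝓝 (S0 * u - K * v)) := by
    intro l u v h1 h2
    rw [hBSfun]
    exact (h1.const_mul S0).sub (h2.const_mul K)
  -- limit at infinity
  have hBStop : Tendsto BS atTop (𝓝 S0) := by
    have h0 : Tendsto (fun ω : ℝ => m / ω) atTop (𝓝 0) := by
      simpa [div_eq_mul_inv] using tendsto_inv_atTop_zero.const_mul m
    have hh : Tendsto (fun ω : ℝ => ω / 2) atTop atTop :=
      Tendsto.atTop_div_const (by norm_num : (0:ℝ) < 2) tendsto_id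
    have hdp : Tendsto (fun ω : ℝ => m / ω + ω / 2) atTop atTop := h0.add_atTop hh
    have hdm : Tendsto (fun ω : ℝ => m / ω - ω / 2) atTop atBot := by
      have := h0.add_atBot (tendsto_neg_atTop_atBot.comp hh)
      simpa [Function.comp, sub_eq_add_neg] using this
    have := hComp (hNtop.comp hdp) (hNbot.comp hdm)
    simpa using this
  -- limit at zero
  have hBSzero : Tendsto BS (nhdsWithin 0 (Set.Ioi 0)) (𝓝 (max (S0 - K) 0)) := by
    have hhalf : Tendsto (fun ω : ℝ => ω / 2) (nhdsWithin 0 (Set.Ioi 0)) (𝓝 0) := by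
      have h := ((continuous_id.div_const (2:ℝ)).tendsto 0).mono_left
        (nhdsWithin_le_nhds (s := Set.Ioi 0))
      simpa using h
    rcases lt_trichotomy m 0 with hm0 | hm0 | hm0
    · -- S0 < K
      have hSK : S0 < K := by
        have h' := (Real.log_neg_iff (div_pos hS0 hK)).1 hm0
        exact (div_lt_one hK).1 h'
      have hmax : max (S0 - K) 0 = 0 := max_eq_right (by linarith)
      have h1 : Tendsto (fun ω : ℝ => m / ω) (nhdsWithin 0 (Set.Ioi 0)) atBot := by
        have := (tendsto_const_mul_atBot_of_neg hm0).2 tendsto_inv_nhdsGT_zero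
        simpa [div_eq_mul_inv] using this
      have hdp : Tendsto (fun ω : ℝ => m / ω + ω / 2) (nhdsWithin 0 (Set.Ioi 0)) atBot :=
        h1.atBot_add hhalf
      have hdm : Tendsto (fun ω : ℝ => m / ω - ω / 2) (nhdsWithin 0 (Set.Ioi 0)) atBot := by
        have := h1.atBot_add hhalf.neg
        simpa [sub_eq_add_neg] using this
      have := hComp (hNbot.comp hdp) (hNbot.comp hdm)
      rw [hmax]
      simpa using this
    · -- S0 = K
      have hSK : S0 = K := by
        have h1 : S0 / K = 1 := by
          rcases Real.log_eq_zero.1 (show Real.log (S0 / K) = 0 from hm0) with h | h | h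
          · exact absurd h (div_pos hS0 hK).ne'
          · exact h
          · nlinarith [div_pos hS0 hK]
        field_simp at h1
        exact h1
      have hmax : max (S0 - K) 0 = 0 := by simp [hSK]
      have hdp : Tendsto (fun ω : ℝ => m / ω + ω / 2) (nhdsWithin 0 (Set.Ioi 0)) (𝓝 0) := by
        simp only [hm0, zero_div, zero_add]
        exact hhalf
      have hdm : Tendsto (fun ω : ℝ => m / ω - ω / 2) (nhdsWithin 0 (Set.Ioi 0)) (𝓝 0) := by
        simp only [hm0, zero_div, zero_sub]
        simpa using hhalf.neg
      have := hComp ((hNcont.tendsto 0).comp hdp) ((hNcont.tendsto 0).comp hdm)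
      rw [hmax]
      convert this using 2
      rw [hSK]; ring
    · -- S0 > K
      have hSK : K < S0 := by
        have h' := (Real.log_pos_iff (div_pos hS0 hK).le).1 hm0
        exact (one_lt_div hK).1 h'
      have hmax : max (S0 - K) 0 = S0 - K := max_eq_left (by linarith)
      have h1 : Tendsto (fun ω : ℝ => m / ω) (nhdsWithin 0 (Set.Ioi 0)) atTop := by
        have := (tendsto_const_mul_atTop_of_pos hm0).2 tendsto_inv_nhdsGT_zero
        simpa [div_eq_mul_inv] using this
      have hdp : Tendsto (fun ω : ℝ => m / ω + ω / 2) (nhdsWithin 0 (Set.Ioi 0)) atTop :=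
        h1.atTop_add hhalf
      have hdm : Tendsto (fun ω : ℝ => m / ω - ω / 2) (nhdsWithin 0 (Set.Ioi 0)) atTop := by
        have := h1.atTop_add hhalf.neg
        simpa [sub_eq_add_neg] using this
      have := hComp (hNtop.comp hdp) (hNtop.comp hdm)
      rw [hmax]
      simpa using this
  refine ⟨hCont, hMono, hBSzero, hBStop, ?_⟩
  -- existence and uniqueness of implied vol
  intro p hp
  obtain ⟨hp1, hp2⟩ := hp
  obtain ⟨a, haBS, ha⟩ : ∃ a : ℝ, BS a < p ∧ a ∈ Set.Ioi (0 : ℝ) :=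
    ((hBSzero.eventually_lt_const hp1).and self_mem_nhdsWithin).exists
  obtain ⟨b, hbBS, hab⟩ : ∃ b : ℝ, p < BS b ∧ a < b :=
    ((hBStop.eventually_const_lt hp2).and (eventually_gt_atTop a)).exists
  have haI : (0 : ℝ) < a := ha
  have hIccsub : Set.Icc a b ⊆ Set.Ioi 0 := fun x hx => lt_of_lt_of_le haI hx.1
  have hIVT := intermediate_value_Icc hab.le (hCont.mono hIccsub)
  have hpmem : p ∈ Set.Icc (BS a) (BS b) := ⟨haBS.le, hbBS.le⟩
  obtain ⟨ω, hωab, hωp⟩ := hIVT hpmem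
  have hωpos : 0 < ω := lt_of_lt_of_le haI hωab.1
  refine ⟨ω, ⟨hωpos, hωp⟩, ?_⟩
  rintro y ⟨hy, hyp⟩
  exact hMono.injOn (Set.mem_Ioi.2 hy) (Set.mem_Ioi.2 hωpos) (hyp.trans hωp.symm)
end

section
/- Let X and Y be integrable real random variables on a probability space with E[Y | σ(X)] = X almost surely, and let K_1 > K_2 ≥ 0 be real numbers. If E[(X − K_1)_+] > 0, then E[(Y − K_2)_+] > E[(X − K_1)_+] (the Calendar Vertical Spread is strictly positive). -/
open MeasureTheory

/-- strict positivity of the Calendar Vertical Spread. If `E[Y | σ(X)] = X`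
a.s., `K₁ > K₂ ≥ 0` and `E[(X − K₁)₊] > 0`, then `E[(Y − K₂)₊] > E[(X − K₁)₊]`. -/
theorem stmt14 {Ω : Type*} [MeasurableSpace Ω] (P : Measure Ω) [IsProbabilityMeasure P]
    (X Y : Ω → ℝ) (hX : Measurable X) (hY : Measurable Y)
    (hXi : Integrable X P) (hYi : Integrable Y P)
    (hmart : P[Y | MeasurableSpace.comap X inferInstance] =ᵐ[P] X)
    (K1 K2 : ℝ) (hK : K2 < K1) (hK2 : 0 ≤ K2)
    (hpos : 0 < ∫ ω, max (X ω - K1) 0 ∂P) :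
    ∫ ω, max (X ω - K1) 0 ∂P < ∫ ω, max (Y ω - K2) 0 ∂P := by
  have hm : MeasurableSpace.comap X (inferInstance : MeasurableSpace ℝ) ≤ _ := hX.comap_le
  haveI : SigmaFinite (P.trim hm) := by
    have : IsFiniteMeasure (P.trim hm) := isFiniteMeasure_trim hm
    infer_instance
  set A : Set Ω := {ω | K1 < X ω} with hAdef
  have hAm : MeasurableSet[MeasurableSpace.comap X (inferInstance : MeasurableSpace ℝ)] A := ⟨Set.Ioi K1, measurableSet_Ioi, rfl⟩
  have hA : MeasurableSet A := hm _ hAm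
  -- P(A) > 0
  have hPA : 0 < (P A).toReal := by
    rcases eq_or_lt_of_le ((zero_le : (0:ENNReal) ≤ P A)) with h | h
    · exfalso
      have hz : ∀ᵐ ω ∂P, ω ∉ A := measure_eq_zero_iff_ae_notMem.mp h.symm
      have : ∫ ω, max (X ω - K1) 0 ∂P = 0 := by
        refine integral_eq_zero_of_ae ?_
        filter_upwards [hz] with ω hω
        have : X ω ≤ K1 := le_of_not_gt hω
        simp [max_eq_right, sub_nonpos.mpr this]
      linarith
    · exact ENNReal.toReal_pos h.ne' (measure_ne_top P A)
  -- ∫_A Y = ∫_A X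
  have hint : ∫ ω in A, Y ω ∂P = ∫ ω in A, X ω ∂P := by
    rw [← setIntegral_condExp hm hYi hAm]
    exact setIntegral_congr_ae hA (hmart.mono fun ω h _ => h.symm) |>.symm
  have hXiA : Integrable X (P.restrict A) := hXi.restrict
  have hYiA : Integrable Y (P.restrict A) := hYi.restrict
  have hmax1 : Integrable (fun ω => max (X ω - K1) 0) P :=
    (hXi.sub (integrable_const K1)).pos_part
  have hmax2 : Integrable (fun ω => max (Y ω - K2) 0) P :=
    (hYi.sub (integrable_const K2)).pos_part
  -- ∫ (X-K1)+ = ∫_A (X - K1)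
  have h1 : ∫ ω, max (X ω - K1) 0 ∂P = ∫ ω in A, (X ω - K1) ∂P := by
    rw [← setIntegral_eq_integral_of_forall_compl_eq_zero
      (s := A) (f := fun ω => max (X ω - K1) 0)
      (fun ω hω => by
        have : X ω ≤ K1 := le_of_not_gt hω
        simp [max_eq_right, sub_nonpos.mpr this])]
    refine setIntegral_congr_fun hA fun ω hω => ?_
    exact max_eq_left (by have : K1 < X ω := hω; linarith)
  -- chain
  have h2 : ∫ ω in A, (X ω - K1) ∂P + (K1 - K2) * (P A).toReal
      = ∫ ω in A, (Y ω - K2) ∂P := by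
    rw [integral_sub hXiA (integrable_const _), integral_sub hYiA (integrable_const _),
      hint, integral_const, integral_const]
    simp [Measure.restrict_apply_univ, smul_eq_mul, Measure.real]
    ring
  have h3 : ∫ ω in A, (Y ω - K2) ∂P ≤ ∫ ω, max (Y ω - K2) 0 ∂P := by
    calc ∫ ω in A, (Y ω - K2) ∂P ≤ ∫ ω in A, max (Y ω - K2) 0 ∂P := by
          refine setIntegral_mono (hYiA.sub (integrable_const _)) hmax2.restrict ?_
          intro ω; exact le_max_left _ _
      _ ≤ ∫ ω, max (Y ω - K2) 0 ∂P :=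
          setIntegral_le_integral hmax2 (Filter.Eventually.of_forall fun ω => le_max_right _ _)
  have hKK : 0 < (K1 - K2) * (P A).toReal := mul_pos (by linarith) hPA
  linarith [h1, h2, h3]
end

section
/- Let X, Y_1, Y_2 be integrable real random variables on a probability space with E[Y_1 | σ(X)] = X and E[Y_2 | σ(X)] = X almost surely, and let K_1 < K < K_2 be real numbers. Then (K_2 − K) · E[(Y_1 − K_1)_+] + (K − K_1) · E[(Y_2 − K_2)_+] ≥ (K_2 − K_1) · E[(X − K)_+]; equivalently, the Calendar Butterfly Spread (E[(Y_1−K_1)_+] − E[(X−K)_+])/(K − K_1) − (E[(X−K)_+] − E[(Y_2−K_2)_+])/(K_2 − K) is nonnegative. -/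
set_option maxHeartbeats 1000000


open MeasureTheory

lemma call_mono {Ω : Type*} [MeasurableSpace Ω] (P : Measure Ω) [IsProbabilityMeasure P]
    (X Y : Ω → ℝ) (hX : Measurable X)
    (hXi : Integrable X P) (hYi : Integrable Y P)
    (hmart : P[Y | MeasurableSpace.comap X inferInstance] =ᵐ[P] X) (c : ℝ) :
    ∫ ω, max (X ω - c) 0 ∂P ≤ ∫ ω, max (Y ω - c) 0 ∂P := by
  have hm : MeasurableSpace.comap X inferInstance ≤ ‹MeasurableSpace Ω› := hX.comap_le
  have hAm : MeasurableSet[MeasurableSpace.comap X inferInstance] (X ⁻¹' Set.Ioi c) :=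
    ⟨Set.Ioi c, measurableSet_Ioi, rfl⟩
  have hA : MeasurableSet (X ⁻¹' Set.Ioi c) := hm _ hAm
  have hXci : Integrable (fun ω => X ω - c) P := hXi.sub (integrable_const c)
  have hYci : Integrable (fun ω => Y ω - c) P := hYi.sub (integrable_const c)
  have hYpos : Integrable (fun ω => max (Y ω - c) 0) P := hYci.pos_part
  have h1 : ∫ ω, max (X ω - c) 0 ∂P = ∫ ω in X ⁻¹' Set.Ioi c, (X ω - c) ∂P := by
    rw [← integral_indicator hA]
    congr 1
    ext ω
    by_cases hω : ω ∈ X ⁻¹' Set.Ioi c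
    · simp only [Set.indicator_of_mem hω]
      have : c < X ω := hω
      rw [max_eq_left (by linarith)]
    · simp only [Set.indicator_of_notMem hω]
      have : ¬ c < X ω := hω
      rw [max_eq_right (by push_neg at this; linarith)]
  have h2 : ∫ ω in X ⁻¹' Set.Ioi c, (X ω - c) ∂P = ∫ ω in X ⁻¹' Set.Ioi c, (Y ω - c) ∂P := by
    rw [integral_sub (hXi.restrict) (integrable_const c),
        integral_sub (hYi.restrict) (integrable_const c)]
    congr 1
    have hset : ∫ ω in X ⁻¹' Set.Ioi c, (P[Y | MeasurableSpace.comap X inferInstance]) ω ∂P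
        = ∫ ω in X ⁻¹' Set.Ioi c, Y ω ∂P := setIntegral_condExp hm hYi hAm
    rw [← hset]
    exact integral_congr_ae (ae_restrict_of_ae (hmart.mono fun ω hω => hω.symm))
  have h3 : ∫ ω in X ⁻¹' Set.Ioi c, (Y ω - c) ∂P ≤ ∫ ω in X ⁻¹' Set.Ioi c, max (Y ω - c) 0 ∂P := by
    apply setIntegral_mono_on hYci.integrableOn hYpos.integrableOn hA
    intro ω _
    exact le_max_left _ _
  have h4 : ∫ ω in X ⁻¹' Set.Ioi c, max (Y ω - c) 0 ∂P ≤ ∫ ω, max (Y ω - c) 0 ∂P :=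
    setIntegral_le_integral hYpos (Filter.Eventually.of_forall fun ω => le_max_right _ _)
  linarith

/-- nonnegativity of the Calendar Butterfly Spread. If `E[Y₁ | σ(X)] = X`
and `E[Y₂ | σ(X)] = X` a.s. and `K₁ < K < K₂`, then
`(K₂ − K)·E[(Y₁ − K₁)₊] + (K − K₁)·E[(Y₂ − K₂)₊] ≥ (K₂ − K₁)·E[(X − K)₊]`. -/
theorem stmt15 {Ω : Type*} [MeasurableSpace Ω] (P : Measure Ω) [IsProbabilityMeasure P]
    (X Y1 Y2 : Ω → ℝ) (hX : Measurable X) (hY1 : Measurable Y1) (hY2 : Measurable Y2)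
    (hXi : Integrable X P) (hY1i : Integrable Y1 P) (hY2i : Integrable Y2 P)
    (hmart1 : P[Y1 | MeasurableSpace.comap X inferInstance] =ᵐ[P] X)
    (hmart2 : P[Y2 | MeasurableSpace.comap X inferInstance] =ᵐ[P] X)
    (K1 K K2 : ℝ) (h1 : K1 < K) (h2 : K < K2) :
    (K2 - K1) * ∫ ω, max (X ω - K) 0 ∂P ≤
      (K2 - K) * (∫ ω, max (Y1 ω - K1) 0 ∂P) + (K - K1) * (∫ ω, max (Y2 ω - K2) 0 ∂P) := by
  have key1 : ∫ ω, max (X ω - K1) 0 ∂P ≤ ∫ ω, max (Y1 ω - K1) 0 ∂P :=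
    call_mono P X Y1 hX hXi hY1i hmart1 K1
  have key2 : ∫ ω, max (X ω - K2) 0 ∂P ≤ ∫ ω, max (Y2 ω - K2) 0 ∂P :=
    call_mono P X Y2 hX hXi hY2i hmart2 K2
  have hint : ∀ c : ℝ, Integrable (fun ω => max (X ω - c) 0) P :=
    fun c => (hXi.sub (integrable_const c)).pos_part
  have hpt : ∀ x : ℝ, (K2 - K1) * max (x - K) 0 ≤
      (K2 - K) * max (x - K1) 0 + (K - K1) * max (x - K2) 0 := by
    intro x
    rcases le_or_gt x K with hx | hx
    · rw [max_eq_right (by linarith)]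
      have a1 : (0:ℝ) ≤ max (x - K1) 0 := le_max_right _ _
      have a2 : (0:ℝ) ≤ max (x - K2) 0 := le_max_right _ _
      nlinarith
    · rw [max_eq_left (by linarith), max_eq_left (by linarith)]
      have a2 : x - K2 ≤ max (x - K2) 0 := le_max_left _ _
      nlinarith
  have hmain : (K2 - K1) * ∫ ω, max (X ω - K) 0 ∂P ≤
      (K2 - K) * (∫ ω, max (X ω - K1) 0 ∂P) + (K - K1) * (∫ ω, max (X ω - K2) 0 ∂P) := by
    rw [← integral_const_mul, ← integral_const_mul, ← integral_const_mul,
        ← integral_add ((hint K1).const_mul _) ((hint K2).const_mul _)]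
    exact integral_mono ((hint K).const_mul _)
      (((hint K1).const_mul _).add ((hint K2).const_mul _)) fun ω => hpt (X ω)
  nlinarith [integral_nonneg (f := fun ω => max (Y1 ω - K1) 0) (fun ω => le_max_right (Y1 ω - K1) 0) (μ := P),
    integral_nonneg (f := fun ω => max (Y2 ω - K2) 0) (fun ω => le_max_right (Y2 ω - K2) 0) (μ := P)]
end
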